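/- arXiv:1601.03924 — 3 statements merged into one kernel-verified Lean document; each statement's English description precedes it below -/
import Mathlib

section
/- Let λ ∈ ℂ^n be of standard block form and let μ ∈ ℂ^n. Then the following are equivalent: (a) μ − λ ∈ ℤΦ and there exist w ∈ W, complex numbers k_j, and finitely many pairwise orthogonal roots α_j ∈ Φ with (λ, ᾱ_j) = 0 for all j, such that μ = w(λ − Σ_j k_j α_j); (b) λ ≈ μ, i.e. the same conclusion holds with w ∈ W_λ and all k_j ∈ ℤ. -/
open Finset

noncomputable section

/-- The `i`-th standard basis vector of `ℂ^n`. -/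
def eps (n : ℕ) (i : Fin n) : Fin n → ℂ := fun t => if t = i then 1 else 0

/-- The standard symmetric bilinear form on `ℂ^n`. -/
def pform {n : ℕ} (x y : Fin n → ℂ) : ℂ := ∑ i, x i * y i

/-- The integral Weyl group `W_λ`: the subgroup of `S_n` generated by the transpositions
`s_{ij}` with `λ_i - λ_j ∈ ℤ`. -/
def IntegralWeyl (n : ℕ) (lam : Fin n → ℂ) : Subgroup (Equiv.Perm (Fin n)) :=
  Subgroup.closure
    {σ | ∃ i j : Fin n, i ≠ j ∧ (∃ m : ℤ, lam i - lam j = (m : ℂ)) ∧ σ = Equiv.swap i j}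

-- ### auxiliary lemmas

theorem SB.perm_map_univ {α : Type*} [Fintype α] [DecidableEq α] (w : Equiv.Perm α) :
    Finset.univ.val.map ⇑w = Finset.univ.val := by
  have h : Finset.univ.map w.toEmbedding = Finset.univ := Finset.map_univ_equiv w
  calc Finset.univ.val.map ⇑w = (Finset.univ.map w.toEmbedding).val := rfl
  _ = _ := by rw [h]

theorem SB.perm_of_map_eq {T : Type*} [Fintype T] [DecidableEq T] {β : Type*} [DecidableEq β]
    (f g : T → β) (h : Finset.univ.val.map f = Finset.univ.val.map g) :
    ∃ σ : Equiv.Perm T, ∀ t, f t = g (σ t) := by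
  classical
  have hcard : ∀ b : β, Fintype.card {t // f t = b} = Fintype.card {t // g t = b} := by
    intro b
    rw [Fintype.card_subtype, Fintype.card_subtype]
    have h2 := congrArg (Multiset.count b) h
    rw [Multiset.count_map, Multiset.count_map] at h2
    simpa [Finset.card, Finset.filter, eq_comm] using h2
  let e : ∀ b : β, {t // f t = b} ≃ {t // g t = b} := fun b => Fintype.equivOfCardEq (hcard b)
  let σ : T ≃ T := (Equiv.sigmaFiberEquiv f).symm.trans
    ((Equiv.sigmaCongrRight e).trans (Equiv.sigmaFiberEquiv g))
  refine ⟨σ, fun t => ?_⟩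
  have h3 : σ t = (Equiv.sigmaFiberEquiv g) ⟨f t, e (f t) ⟨t, rfl⟩⟩ := rfl
  rw [h3]
  exact ((e (f t) ⟨t, rfl⟩).2).symm

theorem SB.mem_closure_of_fiber_preserving {α β : Type*} [Fintype α] [DecidableEq α] (f : α → β)
    (σ : Equiv.Perm α) (hσ : ∀ i, f (σ i) = f i) :
    σ ∈ Subgroup.closure {τ | ∃ i j, i ≠ j ∧ f i = f j ∧ τ = Equiv.swap i j} := by
  have key : ∀ (m : ℕ) (σ : Equiv.Perm α), σ.support.card ≤ m → (∀ i, f (σ i) = f i) →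
      σ ∈ Subgroup.closure {τ | ∃ i j, i ≠ j ∧ f i = f j ∧ τ = Equiv.swap i j} := by
    intro m
    induction m with
    | zero =>
      intro σ hc _
      have : σ = 1 := by
        rwa [Nat.le_zero, Finset.card_eq_zero, Equiv.Perm.support_eq_empty_iff] at hc
      rw [this]; exact Subgroup.one_mem _
    | succ m ih =>
      intro σ hc hσ
      rcases eq_or_ne σ 1 with rfl | hne
      · exact Subgroup.one_mem _
      · obtain ⟨i, hi⟩ : ∃ i, σ i ≠ i := by
          by_contra h
          push_neg at h
          exact hne (Equiv.ext h)
        set j := σ i with hj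
        set σ' := Equiv.swap i j * σ with hσ'
        have hfix : σ' i = i := by simp [hσ', hj]
        have hsub : σ'.support ⊆ σ.support.erase i := by
          intro x hx
          rw [Finset.mem_erase]
          have hx' : σ' x ≠ x := Equiv.Perm.mem_support.mp hx
          constructor
          · rintro rfl; exact hx' hfix
          · rw [Equiv.Perm.mem_support]
            intro hxx
            apply hx'
            simp only [hσ', Equiv.Perm.mul_apply, hxx]
            rw [Equiv.swap_apply_of_ne_of_ne]
            · rintro rfl; exact hi hxx
            · rintro rfl
              exact (hi (σ.injective (hxx.trans hj))).elim
        have hcard : σ'.support.card ≤ m := by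
          have h1 : (σ.support.erase i).card < σ.support.card :=
            Finset.card_erase_lt_of_mem (Equiv.Perm.mem_support.mpr hi)
          have := Finset.card_le_card hsub
          omega
        have hfij : f j = f i := hσ i
        have hswapf : ∀ y, f (Equiv.swap i j y) = f y := by
          intro y
          rcases eq_or_ne y i with rfl | h1
          · rw [Equiv.swap_apply_left]; exact hfij
          rcases eq_or_ne y j with rfl | h2
          · rw [Equiv.swap_apply_right]; exact hfij.symm
          · rw [Equiv.swap_apply_of_ne_of_ne h1 h2]
        have hσ'mem : σ' ∈ Subgroup.closure {τ | ∃ i j, i ≠ j ∧ f i = f j ∧ τ = Equiv.swap i j} := by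
          refine ih σ' hcard fun x => ?_
          simp only [hσ', Equiv.Perm.mul_apply]
          rw [hswapf, hσ]
        have hswap : Equiv.swap i j ∈ {τ | ∃ i j, i ≠ j ∧ f i = f j ∧ τ = Equiv.swap i j} :=
          ⟨i, j, fun h => hi h.symm, hfij.symm, rfl⟩
        have hfac : σ = Equiv.swap i j * σ' := by
          rw [hσ', ← mul_assoc, Equiv.swap_mul_self, one_mul]
        rw [hfac]
        exact Subgroup.mul_mem _ (Subgroup.subset_closure hswap) hσ'mem
  exact key σ.support.card σ le_rfl hσ

def SB.zsetoid : Setoid ℂ where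
  r x y := ∃ m : ℤ, x - y = (m : ℂ)
  iseqv := by
    constructor
    · exact fun x => ⟨0, by simp⟩
    · rintro x y ⟨m, hm⟩; exact ⟨-m, by push_cast; linear_combination -hm⟩
    · rintro x y z ⟨m, hm⟩ ⟨m', hm'⟩; exact ⟨m + m', by push_cast; linear_combination hm + hm'⟩

def SB.Qz := Quotient SB.zsetoid
def SB.qz : ℂ → SB.Qz := Quotient.mk SB.zsetoid
instance : DecidableEq SB.Qz := Classical.decEq _
theorem SB.qz_eq_iff {x y : ℂ} : SB.qz x = SB.qz y ↔ ∃ m : ℤ, x - y = (m : ℂ) := by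
  constructor
  · intro h; exact Quotient.exact h
  · intro h; exact Quotient.sound h

def SB.z2setoid : Setoid ℂ where
  r x y := (∃ m : ℤ, x - y = (m : ℂ)) ∨ (∃ m : ℤ, x + y = (m : ℂ))
  iseqv := by
    constructor
    · exact fun x => Or.inl ⟨0, by simp⟩
    · rintro x y (⟨m, hm⟩ | ⟨m, hm⟩)
      · exact Or.inl ⟨-m, by push_cast; linear_combination -hm⟩
      · exact Or.inr ⟨m, by linear_combination hm⟩
    · rintro x y z (⟨m, hm⟩ | ⟨m, hm⟩) (⟨m', hm'⟩ | ⟨m', hm'⟩)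
      · exact Or.inl ⟨m + m', by push_cast; linear_combination hm + hm'⟩
      · exact Or.inr ⟨m + m', by push_cast; linear_combination hm + hm'⟩
      · exact Or.inr ⟨m - m', by push_cast; linear_combination hm - hm'⟩
      · exact Or.inl ⟨m - m', by push_cast; linear_combination hm - hm'⟩

def SB.Q2 := Quotient SB.z2setoid
def SB.q2 : ℂ → SB.Q2 := Quotient.mk SB.z2setoid
instance : DecidableEq SB.Q2 := Classical.decEq _
theorem SB.q2_eq_iff {x y : ℂ} :
    SB.q2 x = SB.q2 y ↔ (∃ m : ℤ, x - y = (m : ℂ)) ∨ (∃ m : ℤ, x + y = (m : ℂ)) := by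
  constructor
  · intro h; exact Quotient.exact h
  · intro h; exact Quotient.sound h
theorem SB.q2_neg (x : ℂ) : SB.q2 (-x) = SB.q2 x := SB.q2_eq_iff.mpr (Or.inr ⟨0, by simp⟩)

def SB.qzq2 : SB.Qz → SB.Q2 := Quotient.lift SB.q2 (by
  rintro x y ⟨m, hm⟩
  exact Quotient.sound (Or.inl ⟨m, hm⟩))
theorem SB.qzq2_qz (x : ℂ) : SB.qzq2 (SB.qz x) = SB.q2 x := rfl

theorem SB.pform_lam_pair {n : ℕ} (lam : Fin n → ℂ) (a b : Fin n) :
    pform lam (eps n a + eps n b) = lam a + lam b := by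
  simp only [pform, eps, Pi.add_apply, mul_add, Finset.sum_add_distrib, mul_ite, mul_one, mul_zero]
  rw [Finset.sum_ite_eq' univ a lam, Finset.sum_ite_eq' univ b lam]
  simp

theorem SB.pform_root_root {n : ℕ} (a b a' b' : Fin n) :
    pform (eps n a - eps n b) (eps n a' - eps n b') =
      (if a = a' then (1:ℂ) else 0) - (if a = b' then 1 else 0)
        - (if b = a' then 1 else 0) + (if b = b' then 1 else 0) := by
  have h : ∀ (u v : Fin n), (∑ i, (if i = u then (1:ℂ) else 0) * (if i = v then (1:ℂ) else 0))
      = if u = v then 1 else 0 := by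
    intro u v
    simp only [ite_mul, one_mul, zero_mul]
    rw [Finset.sum_ite_eq' univ u (fun i => if i = v then (1:ℂ) else 0)]
    simp
  simp only [pform, eps, Pi.sub_apply, sub_mul, mul_sub, Finset.sum_sub_distrib, h]
  ring

theorem SB.orth_distinct {n : ℕ} (a b a' b' : Fin n) (h1 : a ≠ b) (h2 : a' ≠ b')
    (h0 : pform (eps n a - eps n b) (eps n a' - eps n b') = 0) :
    a ≠ a' ∧ a ≠ b' ∧ b ≠ a' ∧ b ≠ b' := by
  rw [SB.pform_root_root] at h0
  split_ifs at h0 <;> first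
    | (norm_num at h0; done)
    | (exfalso; subst_vars; first | exact h1 rfl | exact h2 rfl)
    | exact ⟨‹_›, ‹_›, ‹_›, ‹_›⟩

/-- evaluation of the root combination at a point -/
theorem SB.S_apply {n N : ℕ} (a b : Fin N → Fin n) (c : Fin N → ℂ) (j : Fin n) :
    (∑ t, c t • (eps n (a t) - eps n (b t))) j
      = ∑ t, c t * ((if j = a t then 1 else 0) - (if j = b t then 1 else 0)) := by
  rw [Finset.sum_apply]
  refine Finset.sum_congr rfl fun t _ => ?_
  simp [eps, Pi.smul_apply, Pi.sub_apply, smul_eq_mul]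

theorem SB.S_int {n N : ℕ} (a b : Fin N → Fin n) (k : Fin N → ℤ) (j : Fin n) :
    ∃ m : ℤ, (∑ t, (k t : ℂ) • (eps n (a t) - eps n (b t))) j = (m : ℂ) := by
  refine ⟨∑ t, k t * ((if j = a t then 1 else 0) - (if j = b t then 1 else 0)), ?_⟩
  rw [SB.S_apply, Int.cast_sum]
  refine Finset.sum_congr rfl fun t _ => ?_
  push_cast
  split_ifs <;> norm_num

theorem SB.S_sum_zero {n N : ℕ} (a b : Fin N → Fin n) (c : Fin N → ℂ) :
    ∑ j, (∑ t, c t • (eps n (a t) - eps n (b t))) j = 0 := by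
  have h : ∀ j : Fin n, (∑ t, c t • (eps n (a t) - eps n (b t))) j
      = ∑ t, c t * ((if j = a t then 1 else 0) - (if j = b t then 1 else 0)) :=
    SB.S_apply a b c
  rw [Finset.sum_congr rfl fun j _ => h j, Finset.sum_comm]
  refine Finset.sum_eq_zero fun t _ => ?_
  rw [← Finset.mul_sum, Finset.sum_sub_distrib,
    Finset.sum_ite_eq' univ (a t) (fun _ => (1:ℂ)),
    Finset.sum_ite_eq' univ (b t) (fun _ => (1:ℂ))]
  simp

/-- The relation `λ ≈ μ`: there are `w ∈ W_λ`, finitely many pairwise orthogonal roots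
`α_t = ε_{a t} - ε_{b t}` with `(λ, ᾱ_t) = 0`, and integers `k_t`, such that
`μ = w (λ - ∑_t k_t α_t)`. -/
def approx (n : ℕ) (lam mu : Fin n → ℂ) : Prop :=
  ∃ w ∈ IntegralWeyl n lam, ∃ (N : ℕ) (a b : Fin N → Fin n) (k : Fin N → ℤ),
    (∀ t, a t ≠ b t) ∧
    (∀ t t', t ≠ t' →
      pform (eps n (a t) - eps n (b t)) (eps n (a t') - eps n (b t')) = 0) ∧
    (∀ t, pform lam (eps n (a t) + eps n (b t)) = 0) ∧
    mu = (lam - ∑ t, (k t : ℂ) • (eps n (a t) - eps n (b t))) ∘ w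

/-- Data exhibiting `λ ∈ ℂ^n` as being of standard block form: `{1,…,n}` is partitioned
into consecutive intervals of sizes `sz 0, …, sz (k-1)`, with parameters `s 0 = 0`,
`s 1 = 1/2`, and `s r ≢ ± s r'` mod `ℤ` for `r ≠ r'`, together with `ell r ≤ sz r`,
such that on the `r`-th interval the coordinates of `λ` lie in `Λ_{(s r)^(ell r)}(sz r)`. -/
structure StdBlockData (n : ℕ) (lam : Fin n → ℂ) where
  k : ℕ
  hk : 2 ≤ k
  sz : Fin k → ℕ
  hsum : ∑ r, sz r = n
  s : Fin k → ℂ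
  ell : Fin k → ℕ
  hell : ∀ r, ell r ≤ sz r
  hs0 : s ⟨0, by omega⟩ = 0
  hs1 : s ⟨1, by omega⟩ = 1 / 2
  hdist : ∀ r r' : Fin k, r ≠ r' →
    (∀ m : ℤ, s r - s r' ≠ (m : ℂ)) ∧ (∀ m : ℤ, s r + s r' ≠ (m : ℂ))
  hlam : ∀ (r : Fin k) (i : Fin n),
    (∑ r' ∈ Finset.univ.filter (· < r), sz r') ≤ i.val →
    i.val < (∑ r' ∈ Finset.univ.filter (· < r), sz r') + sz r →
    (i.val < (∑ r' ∈ Finset.univ.filter (· < r), sz r') + ell r →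
      ∃ m : ℤ, lam i - s r = (m : ℂ)) ∧
    ((∑ r' ∈ Finset.univ.filter (· < r), sz r') + ell r ≤ i.val →
      ∃ m : ℤ, lam i + s r = (m : ℂ))

/-- The starting index of the `r`-th block. -/
def blkStart {n : ℕ} {lam : Fin n → ℂ} (D : StdBlockData n lam) (r : Fin D.k) : ℕ :=
  ∑ r' ∈ Finset.univ.filter (· < r), D.sz r'

/-- The `r`-th block `I_r`, as a set of indices. -/
def blockSet {n : ℕ} {lam : Fin n → ℂ} (D : StdBlockData n lam) (r : Fin D.k) :
    Set (Fin n) :=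
  {i | blkStart D r ≤ i.val ∧ i.val < blkStart D r + D.sz r}

/-- For `λ` of standard block form and arbitrary `μ ∈ ℂ^n`, the following
are equivalent: (a) `μ - λ ∈ ℤΦ` (an integer vector with coordinate sum `0`) and
`μ = w(λ - ∑_j k_j α_j)` for some `w ∈ W`, complex numbers `k_j` and pairwise orthogonal
roots `α_j` with `(λ, ᾱ_j) = 0`; (b) `λ ≈ μ`, i.e. the same with `w ∈ W_λ` and `k_j ∈ ℤ`. -/
theorem stmt0 {n : ℕ} (lam mu : Fin n → ℂ) (hstd : Nonempty (StdBlockData n lam)) :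
    (((∀ i : Fin n, ∃ m : ℤ, mu i - lam i = (m : ℂ)) ∧ ∑ i, (mu i - lam i) = 0) ∧
      ∃ (w : Equiv.Perm (Fin n)) (N : ℕ) (a b : Fin N → Fin n) (c : Fin N → ℂ),
        (∀ t, a t ≠ b t) ∧
        (∀ t t', t ≠ t' →
          pform (eps n (a t) - eps n (b t)) (eps n (a t') - eps n (b t')) = 0) ∧
        (∀ t, pform lam (eps n (a t) + eps n (b t)) = 0) ∧
        mu = (lam - ∑ t, c t • (eps n (a t) - eps n (b t))) ∘ w)
    ↔ approx n lam mu := by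
  constructor
  · -- forward direction: (a) → (b)
    rintro ⟨⟨hint, _hsum0⟩, w, N, a, b, c, hab, horth, hpair, hmu⟩
    classical
    have hdist : ∀ t t' : Fin N, t ≠ t' → a t ≠ a t' ∧ a t ≠ b t' ∧ b t ≠ a t' ∧ b t ≠ b t' :=
      fun t t' h => SB.orth_distinct _ _ _ _ (hab t) (hab t') (horth t t' h)
    have hainj : Function.Injective a := by
      intro t t' h
      by_contra hne
      exact (hdist t t' hne).1 h
    have hbinj : Function.Injective b := by
      intro t t' h
      by_contra hne
      exact (hdist t t' hne).2.2.2 h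
    have hAB : ∀ t t', a t ≠ b t' := by
      intro t t'
      rcases eq_or_ne t t' with rfl | h
      · exact hab t
      · exact (hdist t t' h).2.1
    have hpair' : ∀ t, lam (b t) = - lam (a t) := by
      intro t
      have h := hpair t
      rw [SB.pform_lam_pair] at h
      linear_combination h
    set x : Fin N → ℂ := fun t => lam (a t) with hx
    have hSa : ∀ (c : Fin N → ℂ) (t : Fin N),
        (∑ t, c t • (eps n (a t) - eps n (b t))) (a t) = c t := by
      intro c t
      rw [SB.S_apply]
      rw [Finset.sum_eq_single t]
      · simp [hAB t t]
      · intro t' _ hne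
        have h1 : a t ≠ a t' := (hdist t t' (fun h => hne h.symm)).1
        have h2 : a t ≠ b t' := hAB t t'
        simp [h1, h2]
      · simp
    have hSb : ∀ (c : Fin N → ℂ) (t : Fin N),
        (∑ t, c t • (eps n (a t) - eps n (b t))) (b t) = - c t := by
      intro c t
      rw [SB.S_apply]
      rw [Finset.sum_eq_single t]
      · rw [if_neg (Ne.symm (hab t)), if_pos rfl]
        ring
      · intro t' _ hne
        have h1 : b t ≠ a t' := Ne.symm (hAB t' t)
        have h2 : b t ≠ b t' := (hdist t t' (fun h => hne h.symm)).2.2.2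
        simp [h1, h2]
      · simp
    have hSoff : ∀ (c : Fin N → ℂ) (j : Fin n), (∀ t, j ≠ a t ∧ j ≠ b t) →
        (∑ t, c t • (eps n (a t) - eps n (b t))) j = 0 := by
      intro c j hj
      rw [SB.S_apply]
      refine Finset.sum_eq_zero fun t _ => ?_
      simp [(hj t).1, (hj t).2]
    set A : Finset (Fin n) := Finset.univ.image a with hA
    set B : Finset (Fin n) := Finset.univ.image b with hB
    have hAval : A.val = Finset.univ.val.map a := Finset.image_val_of_injOn hainj.injOn
    have hBval : B.val = Finset.univ.val.map b := Finset.image_val_of_injOn hbinj.injOn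
    have hdAB : Disjoint A B := by
      rw [Finset.disjoint_left]
      rintro z hz hz'
      rw [hA, Finset.mem_image] at hz
      rw [hB, Finset.mem_image] at hz'
      obtain ⟨t, _, rfl⟩ := hz
      obtain ⟨t', _, he⟩ := hz'
      exact hAB t t' he.symm
    set P : Finset (Fin n) := A ∪ B with hP
    have hPval : P.val = Finset.univ.val.map a + Finset.univ.val.map b := by
      have h1 : (A.disjUnion B hdAB).val = A.val + B.val := rfl
      rw [Finset.disjUnion_eq_union] at h1
      rw [hP, h1, hAval, hBval]
    have hUval : (Finset.univ : Finset (Fin n)).val = P.val + Pᶜ.val := by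
      have h1 : (P.disjUnion Pᶜ disjoint_compl_right).val = P.val + Pᶜ.val := rfl
      rw [Finset.disjUnion_eq_union, Finset.union_compl] at h1
      exact h1
    have hsplit : ∀ {γ : Type} (g : Fin n → γ),
        Finset.univ.val.map g = Finset.univ.val.map (fun t => g (a t))
          + Finset.univ.val.map (fun t => g (b t)) + Pᶜ.val.map g := by
      intro γ g
      rw [hUval, Multiset.map_add, hPval, Multiset.map_add, Multiset.map_map, Multiset.map_map]
      rfl
    have hoffmem : ∀ j ∈ Pᶜ.val, ∀ t, j ≠ a t ∧ j ≠ b t := by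
      intro j hj t
      have hj' : j ∉ P := by
        have := Finset.mem_compl.mp (Finset.mem_def.mpr hj)
        exact this
      constructor
      · rintro rfl
        exact hj' (Finset.mem_union_left _ (Finset.mem_image_of_mem a (Finset.mem_univ t)))
      · rintro rfl
        exact hj' (Finset.mem_union_right _ (Finset.mem_image_of_mem b (Finset.mem_univ t)))
    have hoffeq : ∀ (c : Fin N → ℂ), ∀ j ∈ Pᶜ.val,
        (lam - ∑ t, c t • (eps n (a t) - eps n (b t))) j = lam j := by
      intro c j hj
      rw [Pi.sub_apply, hSoff c j (hoffmem j hj), sub_zero]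
    have hmapmu : ∀ {γ : Type} (q : ℂ → γ),
        Finset.univ.val.map (fun i => q (mu i))
          = Finset.univ.val.map (fun i => q ((lam - ∑ t, c t • (eps n (a t) - eps n (b t))) i)) := by
      intro γ q
      rw [hmu]
      calc Finset.univ.val.map
            (fun i => q (((lam - ∑ t, c t • (eps n (a t) - eps n (b t))) ∘ w) i))
          = (Finset.univ.val.map ⇑w).map
            (fun i => q ((lam - ∑ t, c t • (eps n (a t) - eps n (b t))) i)) := by
            rw [Multiset.map_map]; rfl
        _ = _ := by rw [SB.perm_map_univ]
    have M1 : Finset.univ.val.map (fun i => SB.qz (mu i))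
        = Finset.univ.val.map (fun i => SB.qz (lam i)) :=
      Multiset.map_congr rfl (fun i _ => SB.qz_eq_iff.mpr (hint i))
    have M2 := hmapmu SB.qz
    have M3 : Finset.univ.val.map
          (fun t => SB.qz ((lam - ∑ t, c t • (eps n (a t) - eps n (b t))) (a t)))
        + Finset.univ.val.map
          (fun t => SB.qz ((lam - ∑ t, c t • (eps n (a t) - eps n (b t))) (b t)))
        = Finset.univ.val.map (fun t => SB.qz (lam (a t)))
          + Finset.univ.val.map (fun t => SB.qz (lam (b t))) := by
      have e1 := hsplit (fun z => SB.qz ((lam - ∑ t, c t • (eps n (a t) - eps n (b t))) z))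
      have e2 := hsplit (fun z => SB.qz (lam z))
      have e3 : Pᶜ.val.map (fun z => SB.qz ((lam - ∑ t, c t • (eps n (a t) - eps n (b t))) z))
          = Pᶜ.val.map (fun z => SB.qz (lam z)) :=
        Multiset.map_congr rfl fun j hj => by rw [hoffeq c j hj]
      have e4 := M2.symm.trans M1
      rw [e1, e2, e3] at e4
      exact add_right_cancel e4
    have M3' : Finset.univ.val.map (fun t => SB.qz (x t - c t))
        + Finset.univ.val.map (fun t => SB.qz (c t - x t))
        = Finset.univ.val.map (fun t => SB.qz (x t))
          + Finset.univ.val.map (fun t => SB.qz (- x t)) := by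
      have g1 : Finset.univ.val.map
            (fun t => SB.qz ((lam - ∑ t, c t • (eps n (a t) - eps n (b t))) (a t)))
          = Finset.univ.val.map (fun t => SB.qz (x t - c t)) :=
        Multiset.map_congr rfl fun t _ => by rw [Pi.sub_apply, hSa]
      have g2 : Finset.univ.val.map
            (fun t => SB.qz ((lam - ∑ t, c t • (eps n (a t) - eps n (b t))) (b t)))
          = Finset.univ.val.map (fun t => SB.qz (c t - x t)) :=
        Multiset.map_congr rfl fun t _ => by
          rw [Pi.sub_apply, hSb, hpair' t]
          congr 1
          ring
      have g3 : Finset.univ.val.map (fun t => SB.qz (lam (b t)))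
          = Finset.univ.val.map (fun t => SB.qz (- x t)) :=
        Multiset.map_congr rfl fun t _ => by rw [hpair' t]
      rw [g1, g2, g3] at M3
      exact M3
    have M4 := congrArg (Multiset.map SB.qzq2) M3'
    rw [Multiset.map_add, Multiset.map_add, Multiset.map_map, Multiset.map_map,
      Multiset.map_map, Multiset.map_map] at M4
    have q1 : Finset.univ.val.map (SB.qzq2 ∘ fun t => SB.qz (c t - x t))
        = Finset.univ.val.map (fun t => SB.q2 (x t - c t)) :=
      Multiset.map_congr rfl fun t _ => by
        show SB.q2 (c t - x t) = SB.q2 (x t - c t)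
        rw [show c t - x t = -(x t - c t) by ring, SB.q2_neg]
    have q2' : Finset.univ.val.map (SB.qzq2 ∘ fun t => SB.qz (- x t))
        = Finset.univ.val.map (fun t => SB.q2 (x t)) :=
      Multiset.map_congr rfl fun t _ => by
        show SB.q2 (- x t) = SB.q2 (x t)
        rw [SB.q2_neg]
    have q3 : Finset.univ.val.map (SB.qzq2 ∘ fun t => SB.qz (x t - c t))
        = Finset.univ.val.map (fun t => SB.q2 (x t - c t)) :=
      Multiset.map_congr rfl fun t _ => rfl
    have q4 : Finset.univ.val.map (SB.qzq2 ∘ fun t => SB.qz (x t))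
        = Finset.univ.val.map (fun t => SB.q2 (x t)) :=
      Multiset.map_congr rfl fun t _ => rfl
    rw [q1, q2', q3, q4] at M4
    have M6 : Finset.univ.val.map (fun t => SB.q2 (x t - c t))
        = Finset.univ.val.map (fun t => SB.q2 (x t)) := by
      refine Multiset.ext.mpr fun q => ?_
      have h := congrArg (Multiset.count q) M4
      rw [Multiset.count_add, Multiset.count_add] at h
      omega
    obtain ⟨σp, hσp⟩ := SB.perm_of_map_eq (fun t => SB.q2 (x t))
      (fun t => SB.q2 (x t - c t)) M6.symm
    have hkex : ∀ t, ∃ m : ℤ, ({x t - (m:ℂ), (m:ℂ) - x t} : Multiset ℂ)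
        = {x (σp t) - c (σp t), c (σp t) - x (σp t)} := by
      intro t
      rcases SB.q2_eq_iff.mp (hσp t) with ⟨m, hm⟩ | ⟨m, hm⟩
      · refine ⟨m, ?_⟩
        have e1 : x t - (m:ℂ) = x (σp t) - c (σp t) := by linear_combination hm
        have e2 : (m:ℂ) - x t = c (σp t) - x (σp t) := by linear_combination -hm
        rw [e1, e2]
      · refine ⟨m, ?_⟩
        have e0 : ({x (σp t) - c (σp t), c (σp t) - x (σp t)} : Multiset ℂ)
            = {c (σp t) - x (σp t), x (σp t) - c (σp t)} := Multiset.cons_swap _ _ _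
        have e1 : x t - (m:ℂ) = c (σp t) - x (σp t) := by linear_combination hm
        have e2 : (m:ℂ) - x t = x (σp t) - c (σp t) := by linear_combination -hm
        rw [e0, e1, e2]
    choose k hk using hkex
    have bindeq : ∀ (p q : Fin N → ℂ),
        Finset.univ.val.map p + Finset.univ.val.map q
          = Finset.univ.val.bind (fun t => {p t, q t}) := by
      intro p q
      rw [← Multiset.bind_singleton Finset.univ.val p,
        ← Multiset.bind_singleton Finset.univ.val q, ← Multiset.bind_add]
      refine Multiset.bind_congr fun t _ => ?_
      rw [Multiset.singleton_add]
      rfl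
    have core : Finset.univ.val.map (fun t => x t - (k t : ℂ))
        + Finset.univ.val.map (fun t => (k t : ℂ) - x t)
        = Finset.univ.val.map (fun t => x t - c t)
          + Finset.univ.val.map (fun t => c t - x t) := by
      have r1 : Finset.univ.val.map (fun t => x t - c t)
          = Finset.univ.val.map (fun t => x (σp t) - c (σp t)) := by
        conv_lhs => rw [← SB.perm_map_univ σp]
        rw [Multiset.map_map]
        rfl
      have r2 : Finset.univ.val.map (fun t => c t - x t)
          = Finset.univ.val.map (fun t => c (σp t) - x (σp t)) := by
        conv_lhs => rw [← SB.perm_map_univ σp]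
        rw [Multiset.map_map]
        rfl
      rw [r1, r2, bindeq, bindeq]
      exact Multiset.bind_congr fun t _ => hk t
    have F2 : Finset.univ.val.map (lam - ∑ t, ((k t : ℂ)) • (eps n (a t) - eps n (b t)))
        = Finset.univ.val.map (lam - ∑ t, c t • (eps n (a t) - eps n (b t))) := by
      rw [hsplit (lam - ∑ t, ((k t : ℂ)) • (eps n (a t) - eps n (b t))),
        hsplit (lam - ∑ t, c t • (eps n (a t) - eps n (b t)))]
      have off : Pᶜ.val.map (lam - ∑ t, ((k t : ℂ)) • (eps n (a t) - eps n (b t)))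
          = Pᶜ.val.map (lam - ∑ t, c t • (eps n (a t) - eps n (b t))) :=
        Multiset.map_congr rfl fun j hj => by
          rw [hoffeq _ j hj, hoffeq c j hj]
      rw [off]
      congr 1
      have v1 : Finset.univ.val.map
            (fun t => (lam - ∑ t, ((k t : ℂ)) • (eps n (a t) - eps n (b t))) (a t))
          = Finset.univ.val.map (fun t => x t - (k t : ℂ)) :=
        Multiset.map_congr rfl fun t _ => by rw [Pi.sub_apply, hSa]
      have v2 : Finset.univ.val.map
            (fun t => (lam - ∑ t, ((k t : ℂ)) • (eps n (a t) - eps n (b t))) (b t))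
          = Finset.univ.val.map (fun t => (k t : ℂ) - x t) :=
        Multiset.map_congr rfl fun t _ => by
          rw [Pi.sub_apply, hSb, hpair' t]; ring_nf; simp only [hx]; ring
      have v3 : Finset.univ.val.map
            (fun t => (lam - ∑ t, c t • (eps n (a t) - eps n (b t))) (a t))
          = Finset.univ.val.map (fun t => x t - c t) :=
        Multiset.map_congr rfl fun t _ => by rw [Pi.sub_apply, hSa]
      have v4 : Finset.univ.val.map
            (fun t => (lam - ∑ t, c t • (eps n (a t) - eps n (b t))) (b t))
          = Finset.univ.val.map (fun t => c t - x t) :=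
        Multiset.map_congr rfl fun t _ => by
          rw [Pi.sub_apply, hSb, hpair' t]; ring_nf; simp only [hx]; ring
      rw [v1, v2, v3, v4]
      exact core
    have F1 : Finset.univ.val.map mu
        = Finset.univ.val.map (lam - ∑ t, c t • (eps n (a t) - eps n (b t))) := by
      have h := hmapmu (id : ℂ → ℂ)
      simpa using h
    have F3 : Finset.univ.val.map mu
        = Finset.univ.val.map (lam - ∑ t, ((k t : ℂ)) • (eps n (a t) - eps n (b t))) :=
      F1.trans F2.symm
    obtain ⟨σf, hσf⟩ := SB.perm_of_map_eq mu
      (lam - ∑ t, ((k t : ℂ)) • (eps n (a t) - eps n (b t))) F3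
    have hmueq : mu = (lam - ∑ t, ((k t : ℂ)) • (eps n (a t) - eps n (b t))) ∘ σf :=
      funext hσf
    have hfib : ∀ i, SB.qz (lam (σf i)) = SB.qz (lam i) := by
      intro i
      have h1 : SB.qz (lam (σf i))
          = SB.qz ((lam - ∑ t, ((k t : ℂ)) • (eps n (a t) - eps n (b t))) (σf i)) := by
        obtain ⟨m, hm⟩ := SB.S_int a b k (σf i)
        refine SB.qz_eq_iff.mpr ⟨m, ?_⟩
        rw [Pi.sub_apply]
        linear_combination hm
      rw [h1, ← hσf i]
      exact SB.qz_eq_iff.mpr (hint i)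
    have hmem : σf ∈ IntegralWeyl n lam := by
      have h := SB.mem_closure_of_fiber_preserving (fun i => SB.qz (lam i)) σf hfib
      refine Subgroup.closure_mono ?_ h
      rintro τ ⟨i, j, hij, hq, rfl⟩
      exact ⟨i, j, hij, SB.qz_eq_iff.mp hq, rfl⟩
    exact ⟨σf, hmem, N, a, b, k, hab, horth, hpair, hmueq⟩
  · -- backward direction: (b) → (a)
    rintro ⟨w, hw, N, a, b, k, hab, horth, hpair, hmu⟩
    have hwint : ∀ i, ∃ m : ℤ, lam (w i) - lam i = (m : ℂ) := by
      refine Subgroup.closure_induction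
        (p := fun g _ => ∀ i, ∃ m : ℤ, lam (g i) - lam i = (m : ℂ)) ?_ ?_ ?_ ?_ hw
      · rintro τ ⟨i, j, hij, ⟨m, hm⟩, rfl⟩ i₀
        rcases eq_or_ne i₀ i with rfl | h1
        · rw [Equiv.swap_apply_left]
          exact ⟨-m, by push_cast; linear_combination -hm⟩
        rcases eq_or_ne i₀ j with rfl | h2
        · rw [Equiv.swap_apply_right]
          exact ⟨m, hm⟩
        · rw [Equiv.swap_apply_of_ne_of_ne h1 h2]
          exact ⟨0, by simp⟩
      · intro i
        exact ⟨0, by simp⟩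
      · rintro g g' _ _ hg hg' i
        obtain ⟨m1, h1⟩ := hg (g' i)
        obtain ⟨m2, h2⟩ := hg' i
        refine ⟨m1 + m2, ?_⟩
        rw [Equiv.Perm.mul_apply]
        push_cast
        linear_combination h1 + h2
      · rintro g _ hg i
        obtain ⟨m, hm⟩ := hg (g⁻¹ i)
        rw [show g (g⁻¹ i) = i by simp] at hm
        exact ⟨-m, by push_cast; linear_combination -hm⟩
    refine ⟨⟨fun i => ?_, ?_⟩, w, N, a, b, (fun t => (k t : ℂ)), hab, horth, hpair, hmu⟩
    · obtain ⟨m1, hm1⟩ := hwint i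
      obtain ⟨m2, hm2⟩ := SB.S_int a b k (w i)
      refine ⟨m1 - m2, ?_⟩
      have h : mu i = (lam - ∑ t, ((k t : ℂ)) • (eps n (a t) - eps n (b t))) (w i) :=
        congrFun hmu i
      rw [h, Pi.sub_apply, hm2]
      push_cast
      linear_combination hm1
    · rw [Finset.sum_sub_distrib]
      have h1 : ∑ i, mu i = ∑ i, lam i := by
        calc ∑ i, mu i
            = ∑ i, (lam - ∑ t, ((k t : ℂ)) • (eps n (a t) - eps n (b t))) (w i) := by
              rw [hmu]; rfl
          _ = ∑ j, (lam - ∑ t, ((k t : ℂ)) • (eps n (a t) - eps n (b t))) j :=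
              Equiv.sum_comp w _
          _ = ∑ j, lam j
              - ∑ j, (∑ t, ((k t : ℂ)) • (eps n (a t) - eps n (b t))) j := by
              rw [← Finset.sum_sub_distrib]; rfl
          _ = ∑ j, lam j := by rw [SB.S_sum_zero]; ring
      rw [h1]
      ring


end
end

section
/- Let α = ε_i − ε_{i+1} be a simple positive root and define the star action of s_α on ℂ^n by s_α ∗ ζ := s_α ζ if (ζ, ᾱ) ≠ 0 and s_α ∗ ζ := s_α ζ − α if (ζ, ᾱ) = 0. Then for all ζ, ζ' ∈ ℂ^n one has s_α ∗ ζ ≈ s_α ∗ ζ' if and only if ζ ≈ ζ'. -/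
open Finset

open scoped Classical

noncomputable section

lemma pform_eps {n : ℕ} (f : Fin n → ℂ) (x : Fin n) : pform f (eps n x) = f x := by
  simp [pform, eps, mul_ite]
lemma pform_sub {n : ℕ} (f g h : Fin n → ℂ) : pform f (g - h) = pform f g - pform f h := by
  simp [pform, mul_sub, Finset.sum_sub_distrib]
lemma pform_eps_add {n : ℕ} (f : Fin n → ℂ) (x y : Fin n) :
    pform f (eps n x + eps n y) = f x + f y := by
  have : pform f (eps n x + eps n y) = pform f (eps n x) + pform f (eps n y) := by
    simp [pform, mul_add, Finset.sum_add_distrib]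
  rw [this, pform_eps, pform_eps]
lemma pform_eps_sub {n : ℕ} (f : Fin n → ℂ) (x y : Fin n) :
    pform f (eps n x - eps n y) = f x - f y := by
  rw [pform_sub, pform_eps, pform_eps]

def Pg {n : ℕ} (lam v : Fin n → ℂ) (g : Fin n → Fin n) : Prop :=
  ∀ x, v x ≠ 0 → g x ≠ x ∧ g (g x) = x ∧ lam x + lam (g x) = 0 ∧ v (g x) = -v x

def AppQ (n : ℕ) (lam mu : Fin n → ℂ) : Prop :=
  ∃ w ∈ IntegralWeyl n lam, ∃ v : Fin n → ℂ,
    (∀ x, ∃ m : ℤ, v x = (m : ℂ)) ∧ (∃ g, Pg lam v g) ∧ mu = (lam - v) ∘ w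

lemma root_distinct {n N : ℕ} {a b : Fin N → Fin n} (hab : ∀ t, a t ≠ b t)
    {t t' : Fin N}
    (h : pform (eps n (a t) - eps n (b t)) (eps n (a t') - eps n (b t')) = 0) :
    a t ≠ a t' ∧ a t ≠ b t' ∧ b t ≠ a t' ∧ b t ≠ b t' := by
  rw [pform_eps_sub] at h
  simp only [Pi.sub_apply, eps] at h
  have h1 := hab t; have h2 := hab t'
  by_cases e1 : a t' = a t <;> by_cases e2 : a t' = b t <;>
    by_cases e3 : b t' = a t <;> by_cases e4 : b t' = b t <;>
    simp_all <;>
    first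
      | norm_num at h
      | exact ⟨fun hh => e1 hh.symm, fun hh => e3 hh.symm, fun hh => e2 hh.symm,
          fun hh => e4 hh.symm⟩

lemma approx_to_AppQ {n : ℕ} {lam mu : Fin n → ℂ} (h : approx n lam mu) : AppQ n lam mu := by
  obtain ⟨w, hw, N, a, b, k, hab, horth, hlam, hmu⟩ := h
  set V : Fin n → ℂ := ∑ t, (k t : ℂ) • (eps n (a t) - eps n (b t)) with hV
  have hd : ∀ t t', t ≠ t' → a t ≠ a t' ∧ a t ≠ b t' ∧ b t ≠ a t' ∧ b t ≠ b t' :=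
    fun t t' htt => root_distinct hab (horth t t' htt)
  have hVx : ∀ x, V x =
      ∑ t, (k t : ℂ) * ((if x = a t then 1 else 0) - (if x = b t then 1 else 0)) := by
    intro x
    rw [hV, Finset.sum_apply]
    simp [eps]
  have hVa : ∀ t, V (a t) = (k t : ℂ) := by
    intro t
    rw [hVx, Finset.sum_eq_single t]
    · simp [hab t]
    · intro t' _ htt
      have hdd := hd t t' htt.symm
      simp [hdd.1, hdd.2.1]
    · simp
  have hVb : ∀ t, V (b t) = -(k t : ℂ) := by
    intro t
    rw [hVx, Finset.sum_eq_single t]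
    · have hne : ¬ (b t = a t) := fun he => hab t he.symm
      simp [hne]
    · intro t' _ htt
      have hdd := hd t t' htt.symm
      simp [hdd.2.2.1, hdd.2.2.2]
    · simp
  have haa : ∀ {t t' : Fin N}, a t = a t' → t = t' := by
    intro t t' he; by_contra htt; exact (hd t t' htt).1 he
  have hbb : ∀ {t t' : Fin N}, b t = b t' → t = t' := by
    intro t t' he; by_contra htt; exact (hd t t' htt).2.2.2 he
  have hba : ∀ {t t' : Fin N}, b t = a t' → False := by
    intro t t' he
    rcases eq_or_ne t t' with rfl | htt
    · exact hab t he.symm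
    · exact (hd t t' htt).2.2.1 he
  set g : Fin n → Fin n := fun x =>
    if h1 : ∃ t, x = a t then b h1.choose
    else if h2 : ∃ t, x = b t then a h2.choose
    else x with hg
  have hga : ∀ t, g (a t) = b t := by
    intro t
    have h1 : ∃ t', a t = a t' := ⟨t, rfl⟩
    rw [hg]; simp only [dif_pos h1]
    exact (congrArg b (haa h1.choose_spec)).symm
  have hgb : ∀ t, g (b t) = a t := by
    intro t
    have h1 : ¬ ∃ t', b t = a t' := fun he => hba (Exists.choose_spec he)
    have h2 : ∃ t', b t = b t' := ⟨t, rfl⟩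
    rw [hg]; simp only [dif_neg h1, dif_pos h2]
    exact (congrArg a (hbb h2.choose_spec)).symm
  have hlam' : ∀ t, lam (a t) + lam (b t) = 0 := by
    intro t; have := hlam t; rwa [pform_eps_add] at this
  have hmem : ∀ x, V x ≠ 0 → (∃ t, x = a t) ∨ (∃ t, x = b t) := by
    intro x hx
    by_contra hc
    push_neg at hc
    apply hx
    rw [hVx]
    apply Finset.sum_eq_zero
    intro t _
    simp [hc.1 t, hc.2 t]
  have hPg : Pg lam V g := by
    intro x hx
    rcases hmem x hx with ⟨t, rfl⟩ | ⟨t, rfl⟩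
    · refine ⟨?_, ?_, ?_, ?_⟩
      · rw [hga]; exact fun he => hab t he.symm
      · rw [hga, hgb]
      · rw [hga]; exact hlam' t
      · rw [hga, hVb, hVa]
    · refine ⟨?_, ?_, ?_, ?_⟩
      · rw [hgb]; exact hab t
      · rw [hgb, hga]
      · rw [hgb]; linear_combination hlam' t
      · rw [hgb, hVa, hVb]; ring
  have hint : ∀ x, ∃ m : ℤ, V x = (m : ℂ) := by
    intro x
    by_cases hx : V x = 0
    · exact ⟨0, by simp [hx]⟩
    · rcases hmem x hx with ⟨t, rfl⟩ | ⟨t, rfl⟩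
      · exact ⟨k t, hVa t⟩
      · exact ⟨-k t, by rw [hVb]; push_cast; ring⟩
  exact ⟨w, hw, V, hint, ⟨g, hPg⟩, hmu⟩

lemma AppQ_to_approx {n : ℕ} {lam mu : Fin n → ℂ} (h : AppQ n lam mu) : approx n lam mu := by
  obtain ⟨w, hw, v, hint, ⟨g, hPg⟩, hmu⟩ := h
  set T : Finset (Fin n) := Finset.univ.filter (fun x => v x ≠ 0 ∧ x < g x) with hT
  have hmemT : ∀ x, x ∈ T ↔ (v x ≠ 0 ∧ x < g x) := by intro x; simp [hT]
  set N := T.card with hN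
  set e : {x // x ∈ T} ≃ Fin N := T.equivFin with he
  set a : Fin N → Fin n := fun t => ((e.symm t : {x // x ∈ T}) : Fin n) with ha
  set b : Fin N → Fin n := fun t => g (a t) with hb
  have haT : ∀ t, a t ∈ T := fun t => (e.symm t).2
  have hav : ∀ t, v (a t) ≠ 0 := fun t => ((hmemT _).1 (haT t)).1
  have halt : ∀ t, a t < b t := fun t => ((hmemT _).1 (haT t)).2
  have hab : ∀ t, a t ≠ b t := fun t => ne_of_lt (halt t)
  have hbv : ∀ t, v (b t) = - v (a t) := fun t => (hPg _ (hav t)).2.2.2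
  have hga' : ∀ t, g (b t) = a t := fun t => (hPg _ (hav t)).2.1
  have hainj : ∀ {t t' : Fin N}, a t = a t' → t = t' := by
    intro t t' hh
    have h2 : e.symm t = e.symm t' := Subtype.ext hh
    simpa using congrArg e h2
  have hab' : ∀ t t', a t ≠ b t' := by
    intro t t' hh
    have h1 : b t = a t' := by
      show g (a t) = a t'
      rw [hh]; exact hga' t'
    have h2 : a t < a t' := h1 ▸ halt t
    have h3 : a t' < a t := by rw [hh]; exact halt t'
    exact absurd h2 (not_lt.mpr (le_of_lt h3))
  have hbinj : ∀ {t t' : Fin N}, b t = b t' → t = t' := by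
    intro t t' hh
    have h2 : a t = a t' := by rw [← hga' t, ← hga' t', hh]
    exact hainj h2
  have hk : ∀ t, ∃ m : ℤ, v (a t) = (m : ℂ) := fun t => hint (a t)
  set k : Fin N → ℤ := fun t => (hk t).choose with hkdef
  have hkspec : ∀ t, v (a t) = (k t : ℂ) := fun t => (hk t).choose_spec
  refine ⟨w, hw, N, a, b, k, hab, ?_, ?_, ?_⟩
  · intro t t' htt
    rw [pform_eps_sub]
    have n1 : a t' ≠ a t := fun hh => htt (hainj hh).symm
    have n2 : a t' ≠ b t := hab' t' t
    have n3 : b t' ≠ a t := fun hh => hab' t t' hh.symm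
    have n4 : b t' ≠ b t := fun hh => htt (hbinj hh).symm
    simp [Pi.sub_apply, eps, n1, n2, n3, n4]
  · intro t
    rw [pform_eps_add]
    exact (hPg _ (hav t)).2.2.1
  · have hsum : (∑ t, (k t : ℂ) • (eps n (a t) - eps n (b t))) = v := by
      funext x
      rw [Finset.sum_apply]
      have hterm : ∀ t, ((k t : ℂ) • (eps n (a t) - eps n (b t))) x
          = (k t : ℂ) * ((if x = a t then 1 else 0) - (if x = b t then 1 else 0)) := by
        intro t; simp [eps]
      by_cases hx : v x = 0
      · rw [hx]
        apply Finset.sum_eq_zero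
        intro t _
        rw [hterm]
        have n1 : x ≠ a t := fun hh => hav t (hh ▸ hx)
        have n2 : x ≠ b t := fun hh => by
          have h2 := hbv t; rw [← hh, hx] at h2
          exact hav t (neg_eq_zero.mp h2.symm)
        simp [n1, n2]
      · have hgx := hPg x hx
        by_cases hxg : x < g x
        · have hxT : x ∈ T := (hmemT x).2 ⟨hx, hxg⟩
          set t0 : Fin N := e ⟨x, hxT⟩ with ht0
          have ha0 : a t0 = x := by
            show ((e.symm (e ⟨x, hxT⟩) : {y // y ∈ T}) : Fin n) = x
            rw [Equiv.symm_apply_apply]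
          have hbt0 : b t0 = g x := by show g (a t0) = g x; rw [ha0]
          rw [Finset.sum_eq_single t0]
          · rw [hterm]
            have n1 : x = a t0 := ha0.symm
            have n2 : x ≠ b t0 := by
              rw [hbt0]; exact fun hh => hgx.1 hh.symm
            have hk0 : ((k t0 : ℤ) : ℂ) = v x := by rw [← ha0]; exact (hkspec t0).symm
            rw [if_pos n1, if_neg n2, hk0]
            ring
          · intro t _ htt
            rw [hterm]
            have n1 : x ≠ a t := by
              intro hh
              exact htt (hainj (ha0.trans hh).symm)
            have n2 : x ≠ b t := by
              intro hh
              have h2 := halt t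
              rw [← hh] at h2
              have h3 : g x = a t := by rw [hh, hb, hga']
              rw [← h3] at h2
              exact absurd hxg (not_lt.mpr (le_of_lt h2))
            simp [n1, n2]
          · intro hc; exact absurd (Finset.mem_univ t0) hc
        · have hglt : g x < x := by
            rcases lt_or_gt_of_ne (hgx.1) with h1 | h1
            · exact h1
            · exact absurd h1 hxg
          have hvgx : v (g x) ≠ 0 := by
            rw [hgx.2.2.2]; exact neg_ne_zero.mpr hx
          have hgxT : g x ∈ T := by
            refine (hmemT _).2 ⟨hvgx, ?_⟩
            rw [hgx.2.1]; exact hglt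
          set t0 : Fin N := e ⟨g x, hgxT⟩ with ht0
          have ha0 : a t0 = g x := by
            show ((e.symm (e ⟨g x, hgxT⟩) : {y // y ∈ T}) : Fin n) = g x
            rw [Equiv.symm_apply_apply]
          have hb0 : b t0 = x := by show g (a t0) = x; rw [ha0]; exact hgx.2.1
          rw [Finset.sum_eq_single t0]
          · rw [hterm]
            have n1 : x ≠ a t0 := by rw [ha0]; exact fun hh => hgx.1 hh.symm
            have hk0 : ((k t0 : ℤ) : ℂ) = - v x := by
              rw [← hgx.2.2.2, ← ha0]; exact (hkspec t0).symm
            rw [if_neg n1, if_pos hb0.symm, hk0]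
            ring
          · intro t _ htt
            rw [hterm]
            have n1 : x ≠ a t := by
              intro hh
              have hxT : x ∈ T := hh ▸ haT t
              exact hxg ((hmemT x).1 hxT).2
            have n2 : x ≠ b t := by
              intro hh
              have h3 : g x = a t := by rw [hh]; exact hga' t
              exact htt (hainj (ha0.trans h3).symm)
            simp [n1, n2]
          · intro hc; exact absurd (Finset.mem_univ t0) hc
    rw [hsum] at *
    exact hmu

lemma swap_mem_IW {n : ℕ} (lam : Fin n → ℂ) {p q : Fin n} (hpq : p ≠ q)
    (hm : ∃ m : ℤ, lam p - lam q = (m : ℂ)) : Equiv.swap p q ∈ IntegralWeyl n lam :=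
  Subgroup.subset_closure ⟨p, q, hpq, hm, rfl⟩

lemma IW_shift {n : ℕ} (lam lam' : Fin n → ℂ) (h : ∀ x, ∃ c : ℤ, lam' x = lam x + (c : ℂ)) :
    IntegralWeyl n lam' = IntegralWeyl n lam := by
  unfold IntegralWeyl
  congr 1
  ext σ
  constructor
  · rintro ⟨i, j, hij, ⟨m, hm⟩, rfl⟩
    obtain ⟨ci, hci⟩ := h i; obtain ⟨cj, hcj⟩ := h j
    exact ⟨i, j, hij, ⟨m - ci + cj, by rw [hci, hcj] at hm; push_cast; linear_combination hm⟩, rfl⟩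
  · rintro ⟨i, j, hij, ⟨m, hm⟩, rfl⟩
    obtain ⟨ci, hci⟩ := h i; obtain ⟨cj, hcj⟩ := h j
    exact ⟨i, j, hij, ⟨m + ci - cj, by rw [hci, hcj]; push_cast; linear_combination hm⟩, rfl⟩

lemma IW_conj {n : ℕ} (lam : Fin n → ℂ) (σ : Equiv.Perm (Fin n)) {w : Equiv.Perm (Fin n)}
    (hw : w ∈ IntegralWeyl n lam) : σ⁻¹ * w * σ ∈ IntegralWeyl n (lam ∘ σ) := by
  induction hw using Subgroup.closure_induction'' with
  | one => simpa using one_mem _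
  | mem u hu =>
      obtain ⟨i, j, hij, hm, rfl⟩ := hu
      have hswap : σ⁻¹ * Equiv.swap i j * σ = Equiv.swap (σ⁻¹ i) (σ⁻¹ j) := by
        rw [Equiv.swap_apply_apply, inv_inv]
      rw [hswap]
      refine swap_mem_IW _ (by simpa using hij) ?_
      obtain ⟨m, hm⟩ := hm
      exact ⟨m, by simpa using hm⟩
  | inv_mem u hu =>
      obtain ⟨i, j, hij, hm, rfl⟩ := hu
      rw [Equiv.swap_inv]
      have hswap : σ⁻¹ * Equiv.swap i j * σ = Equiv.swap (σ⁻¹ i) (σ⁻¹ j) := by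
        rw [Equiv.swap_apply_apply, inv_inv]
      rw [hswap]
      refine swap_mem_IW _ (by simpa using hij) ?_
      obtain ⟨m, hm⟩ := hm
      exact ⟨m, by simpa using hm⟩
  | mul u v hu hv ihu ihv =>
      have : σ⁻¹ * (u * v) * σ = (σ⁻¹ * u * σ) * (σ⁻¹ * v * σ) := by group
      rw [this]; exact mul_mem ihu ihv


lemma AppQ_comp {n : ℕ} {lam mu : Fin n → ℂ} (σ : Equiv.Perm (Fin n)) (h : AppQ n lam mu) :
    AppQ n (lam ∘ σ) (mu ∘ σ) := by
  obtain ⟨w, hw, v, hint, ⟨g, hPg⟩, hmu⟩ := h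
  refine ⟨σ⁻¹ * w * σ, IW_conj lam σ hw, v ∘ σ, fun x => hint (σ x),
    ⟨fun x => σ.symm (g (σ x)), ?_⟩, ?_⟩
  · intro x hx
    obtain ⟨h1, h2, h3, h4⟩ := hPg (σ x) hx
    refine ⟨?_, ?_, ?_, ?_⟩
    · intro hh
      apply h1
      have h5 := congrArg σ hh
      rwa [Equiv.apply_symm_apply] at h5
    · show σ.symm (g (σ (σ.symm (g (σ x))))) = x
      rw [Equiv.apply_symm_apply, h2, Equiv.symm_apply_apply]
    · show lam (σ x) + lam (σ (σ.symm (g (σ x)))) = 0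
      rw [Equiv.apply_symm_apply]; exact h3
    · show v (σ (σ.symm (g (σ x)))) = - v (σ x)
      rw [Equiv.apply_symm_apply]; exact h4
  · funext x
    have hh : mu (σ x) = (lam - v) (w (σ x)) := by rw [hmu]; rfl
    simp only [Function.comp_apply, Equiv.Perm.mul_apply, Pi.sub_apply, hh,
      Equiv.apply_symm_apply, Equiv.Perm.inv_def]

lemma B1 {n : ℕ} {lam mu : Fin n → ℂ} {i j : Fin n} (hij : i ≠ j)
    (h : AppQ n lam mu) (hmu0 : mu i + mu j = 0) :
    AppQ n lam (mu + (eps n i - eps n j)) := by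
  obtain ⟨w, hw, v, hint, ⟨g, hPg⟩, hmu⟩ := h
  set p := w i with hp
  set q := w j with hq
  have hpq : p ≠ q := fun hh => hij (w.injective hh)
  have hmux : ∀ x, mu x = lam (w x) - v (w x) := by intro x; rw [hmu]; rfl
  have hsum : lam p + lam q = v p + v q := by
    have h1 := hmux i; have h2 := hmux j
    rw [← hp] at h1; rw [← hq] at h2
    rw [h1, h2] at hmu0
    linear_combination hmu0
  have finish : ∀ (τ : Equiv.Perm (Fin n)), τ ∈ IntegralWeyl n lam →
      ∀ (v₁ : Fin n → ℂ), (∀ x, ∃ m : ℤ, v₁ x = (m : ℂ)) → (∃ g₁, Pg lam v₁ g₁) →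
      (∀ z, lam (τ z) - v₁ (τ z)
          = lam z - v z + ((if z = p then 1 else 0) - (if z = q then 1 else 0))) →
      AppQ n lam (mu + (eps n i - eps n j)) := by
    intro τ hτ v₁ hint₁ hg₁ key
    refine ⟨τ * w, mul_mem hτ hw, v₁, hint₁, hg₁, ?_⟩
    funext x
    have hz := key (w x)
    have e1 : (if w x = p then (1:ℂ) else 0) = (if x = i then 1 else 0) := by
      rw [hp]; simp [Equiv.apply_eq_iff_eq]
    have e2 : (if w x = q then (1:ℂ) else 0) = (if x = j then 1 else 0) := by
      rw [hq]; simp [Equiv.apply_eq_iff_eq]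
    have hLHS : (mu + (eps n i - eps n j)) x
        = lam (w x) - v (w x) + ((if w x = p then (1:ℂ) else 0) - (if w x = q then 1 else 0)) := by
      simp only [Pi.add_apply, Pi.sub_apply, hmux x, e1, e2, eps]
    rw [hLHS]
    show _ = ((lam - v₁) ∘ ⇑(τ * w)) x
    simp only [Function.comp_apply, Pi.sub_apply, Equiv.Perm.mul_apply]
    linear_combination -hz
  by_cases hm : v p = 0
  · by_cases hm' : v q = 0
    · -- Leaf A
      have hsum0 : lam p + lam q = 0 := by rw [hsum, hm, hm']; ring
      set v₁ : Fin n → ℂ := fun x => if x = p then -1 else if x = q then 1 else v x with hv₁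
      have hv₁p : v₁ p = -1 := by rw [hv₁]; simp
      have hv₁q : v₁ q = 1 := by rw [hv₁]; simp [hpq.symm]
      have hv₁x : ∀ x, x ≠ p → x ≠ q → v₁ x = v x := by
        intro x h1 h2; rw [hv₁]; simp [h1, h2]
      set g₁ : Fin n → Fin n := fun x => if x = p then q else if x = q then p else g x with hg₁
      have hg₁p : g₁ p = q := by rw [hg₁]; simp
      have hg₁q : g₁ q = p := by rw [hg₁]; simp [hpq.symm]
      have hg₁x : ∀ x, x ≠ p → x ≠ q → g₁ x = g x := by
        intro x h1 h2; rw [hg₁]; simp [h1, h2]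
      refine finish 1 (one_mem _) v₁ ?_ ⟨g₁, ?_⟩ ?_
      · intro x
        by_cases h1 : x = p
        · exact ⟨-1, by rw [h1, hv₁p]; push_cast; try ring⟩
        · by_cases h2 : x = q
          · exact ⟨1, by rw [h2, hv₁q]; push_cast; try ring⟩
          · rw [hv₁x x h1 h2]; exact hint x
      · intro x hx
        by_cases h1 : x = p
        · subst h1
          exact ⟨by rw [hg₁p]; exact hpq.symm, by rw [hg₁p, hg₁q],
            by rw [hg₁p]; exact hsum0, by rw [hg₁p, hv₁q, hv₁p]; ring⟩
        · by_cases h2 : x = q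
          · subst h2
            exact ⟨by rw [hg₁q]; exact hpq, by rw [hg₁q, hg₁p],
              by rw [hg₁q]; linear_combination hsum0, by rw [hg₁q, hv₁p, hv₁q]; try ring⟩
          · have hvx : v x ≠ 0 := by rwa [hv₁x x h1 h2] at hx
            obtain ⟨k1, k2, k3, k4⟩ := hPg x hvx
            have hgp : g x ≠ p := by
              intro hh; apply hvx; rw [hh, hm] at k4; exact neg_eq_zero.mp k4.symm
            have hgq : g x ≠ q := by
              intro hh; apply hvx; rw [hh, hm'] at k4; exact neg_eq_zero.mp k4.symm
            refine ⟨by rw [hg₁x x h1 h2]; exact k1, ?_, ?_, ?_⟩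
            · rw [hg₁x x h1 h2, hg₁x (g x) hgp hgq, k2]
            · rw [hg₁x x h1 h2]; exact k3
            · rw [hg₁x x h1 h2, hv₁x (g x) hgp hgq, hv₁x x h1 h2, k4]
      · intro z
        simp only [Equiv.Perm.one_apply]
        by_cases h1 : z = p
        · subst h1; rw [hv₁p, if_pos rfl, if_neg hpq, hm]; ring
        · by_cases h2 : z = q
          · subst h2; rw [hv₁q, if_neg hpq.symm, if_pos rfl, hm']; ring
          · rw [hv₁x z h1 h2, if_neg h1, if_neg h2]; ring
    · -- Leaf C' : v p = 0, v q ≠ 0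
      obtain ⟨k1, k2, k3, k4⟩ := hPg q hm'
      set Q := g q with hQ
      have hQp : Q ≠ p := by
        intro hh; apply hm'; rw [hh, hm] at k4; exact neg_eq_zero.mp k4.symm
      have hQq : Q ≠ q := k1
      set τ := Equiv.swap p Q with hτ
      have hτp : τ p = Q := Equiv.swap_apply_left p Q
      have hτQ : τ Q = p := Equiv.swap_apply_right p Q
      have hτx : ∀ z, z ≠ p → z ≠ Q → τ z = z := fun z h1 h2 =>
        Equiv.swap_apply_of_ne_of_ne h1 h2
      have hτmem : τ ∈ IntegralWeyl n lam := by
        apply swap_mem_IW lam (Ne.symm hQp)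
        obtain ⟨mq, hmq⟩ := hint q
        exact ⟨mq, by rw [hmq] at hsum; rw [hm] at hsum; linear_combination hsum - k3⟩
      set v₁ : Fin n → ℂ := fun x => if x = q then v q + 1 else if x = Q then -(v q + 1) else v x
        with hv₁
      have hv₁q : v₁ q = v q + 1 := by rw [hv₁]; simp
      have hv₁Q : v₁ Q = -(v q + 1) := by rw [hv₁]; simp [hQq]
      have hv₁x : ∀ x, x ≠ q → x ≠ Q → v₁ x = v x := by
        intro x h1 h2; rw [hv₁]; simp [h1, h2]
      have hgg : g Q = q := by rw [hQ, k2]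
      refine finish τ hτmem v₁ ?_ ⟨g, ?_⟩ ?_
      · intro x
        obtain ⟨mq, hmq⟩ := hint q
        by_cases h1 : x = q
        · exact ⟨mq + 1, by rw [h1, hv₁q, hmq]; push_cast; try ring⟩
        · by_cases h2 : x = Q
          · exact ⟨-(mq + 1), by rw [h2, hv₁Q, hmq]; push_cast; try ring⟩
          · rw [hv₁x x h1 h2]; exact hint x
      · intro x hx
        by_cases h1 : x = q
        · subst h1
          exact ⟨k1, k2, k3, by rw [← hQ, hv₁Q, hv₁q]⟩
        · by_cases h2 : x = Q
          · subst h2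
            refine ⟨by rw [hgg]; exact Ne.symm hQq, by rw [hgg]; try exact hQ.symm,
              by rw [hgg]; linear_combination k3, by rw [hgg, hv₁q, hv₁Q]; try ring⟩
          · have hvx : v x ≠ 0 := by rwa [hv₁x x h1 h2] at hx
            obtain ⟨l1, l2, l3, l4⟩ := hPg x hvx
            have hgq : g x ≠ q := by
              intro hh
              exact h2 (by rw [hQ, ← hh, l2])
            have hgQ : g x ≠ Q := by
              intro hh
              apply h1
              have h5 := congrArg g hh
              rw [l2, hgg] at h5
              exact h5
            exact ⟨l1, l2, l3, by rw [hv₁x (g x) hgq hgQ, hv₁x x h1 h2]; exact l4⟩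
      · intro z
        by_cases h1 : z = p
        · subst h1
          rw [hτp, hv₁Q, if_pos rfl, if_neg hpq, hm]
          linear_combination k3 - hsum - hm
        · by_cases h2 : z = q
          · subst h2
            rw [hτx q (Ne.symm hpq) (Ne.symm hQq), hv₁q, if_neg (Ne.symm hpq), if_pos rfl]
            ring
          · by_cases h3 : z = Q
            · subst h3
              rw [hτQ, hv₁x p hpq (Ne.symm hQp), if_neg h1, if_neg h2]
              linear_combination hsum - k3 + k4
            · rw [hτx z h1 h3, hv₁x z h2 h3, if_neg h1, if_neg h2]
              ring
  · -- v p ≠ 0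
    obtain ⟨k1, k2, k3, k4⟩ := hPg p hm
    set P := g p with hP
    have hPp : P ≠ p := k1
    have hgP : g P = p := k2
    by_cases hPq : P = q
    · -- Leaf B : g p = q
      set v₁ : Fin n → ℂ := fun x => if x = p then v p - 1 else if x = q then 1 - v p else v x
        with hv₁
      have hv₁p : v₁ p = v p - 1 := by rw [hv₁]; simp
      have hv₁q : v₁ q = 1 - v p := by rw [hv₁]; simp [hpq.symm]
      have hv₁x : ∀ x, x ≠ p → x ≠ q → v₁ x = v x := by
        intro x h1 h2; rw [hv₁]; simp [h1, h2]
      have hgpq : g p = q := by rw [← hP, hPq]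
      have hgqp : g q = p := by rw [← hPq, hgP]
      have hvq : v q = - v p := by rw [← hPq]; exact k4
      have hlampq : lam p + lam q = 0 := by rw [← hPq]; exact k3
      refine finish 1 (one_mem _) v₁ ?_ ⟨g, ?_⟩ ?_
      · intro x
        obtain ⟨mp, hmp⟩ := hint p
        by_cases h1 : x = p
        · exact ⟨mp - 1, by rw [h1, hv₁p, hmp]; push_cast; try ring⟩
        · by_cases h2 : x = q
          · exact ⟨1 - mp, by rw [h2, hv₁q, hmp]; push_cast; try ring⟩
          · rw [hv₁x x h1 h2]; exact hint x
      · intro x hx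
        by_cases h1 : x = p
        · subst h1
          exact ⟨by rw [hgpq]; exact hpq.symm, by rw [hgpq, hgqp],
            by rw [hgpq]; exact hlampq, by rw [hgpq, hv₁q, hv₁p]; ring⟩
        · by_cases h2 : x = q
          · subst h2
            exact ⟨by rw [hgqp]; exact hpq, by rw [hgqp, hgpq],
              by rw [hgqp]; linear_combination hlampq, by rw [hgqp, hv₁p, hv₁q]; ring⟩
          · have hvx : v x ≠ 0 := by rwa [hv₁x x h1 h2] at hx
            obtain ⟨l1, l2, l3, l4⟩ := hPg x hvx
            have hgp' : g x ≠ p := by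
              intro hh
              apply h2
              have h5 := congrArg g hh
              rw [l2, hgpq] at h5
              exact h5
            have hgq' : g x ≠ q := by
              intro hh
              apply h1
              have h5 := congrArg g hh
              rw [l2, hgqp] at h5
              exact h5
            exact ⟨l1, l2, l3, by rw [hv₁x (g x) hgp' hgq', hv₁x x h1 h2]; exact l4⟩
      · intro z
        simp only [Equiv.Perm.one_apply]
        by_cases h1 : z = p
        · subst h1; rw [hv₁p, if_pos rfl, if_neg hpq]; ring
        · by_cases h2 : z = q
          · subst h2; rw [hv₁q, if_neg (Ne.symm hpq), if_pos rfl, hvq]; ring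
          · rw [hv₁x z h1 h2, if_neg h1, if_neg h2]; ring
    · -- Leaf CD : v p ≠ 0, P = g p ≠ q
      set τ := Equiv.swap q P with hτ
      have hτq : τ q = P := Equiv.swap_apply_left q P
      have hτP : τ P = q := Equiv.swap_apply_right q P
      have hτx : ∀ z, z ≠ q → z ≠ P → τ z = z := fun z h1 h2 =>
        Equiv.swap_apply_of_ne_of_ne h1 h2
      have hτmem : τ ∈ IntegralWeyl n lam := by
        apply swap_mem_IW lam (fun hh => hPq hh.symm)
        obtain ⟨mp, hmp⟩ := hint p
        obtain ⟨mq, hmq⟩ := hint q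
        refine ⟨mp + mq, ?_⟩
        rw [hmp, hmq] at hsum
        push_cast
        linear_combination hsum - k3
      set v₁ : Fin n → ℂ := fun x => if x = p then v p - 1 else if x = P then 1 - v p else v x
        with hv₁
      have hv₁p : v₁ p = v p - 1 := by rw [hv₁]; simp
      have hv₁P : v₁ P = 1 - v p := by rw [hv₁]; simp [hPp]
      have hv₁x : ∀ x, x ≠ p → x ≠ P → v₁ x = v x := by
        intro x h1 h2; rw [hv₁]; simp [h1, h2]
      refine finish τ hτmem v₁ ?_ ⟨g, ?_⟩ ?_
      · intro x
        obtain ⟨mp, hmp⟩ := hint p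
        by_cases h1 : x = p
        · exact ⟨mp - 1, by rw [h1, hv₁p, hmp]; push_cast; try ring⟩
        · by_cases h2 : x = P
          · exact ⟨1 - mp, by rw [h2, hv₁P, hmp]; push_cast; try ring⟩
          · rw [hv₁x x h1 h2]; exact hint x
      · intro x hx
        by_cases h1 : x = p
        · subst h1
          exact ⟨by rw [← hP]; exact k1, by rw [← hP]; exact k2,
            by rw [← hP]; exact k3, by rw [← hP, hv₁P, hv₁p]; ring⟩
        · by_cases h2 : x = P
          · subst h2
            exact ⟨by rw [hgP]; exact hPp.symm, by rw [hgP]; try exact hP.symm,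
              by rw [hgP]; linear_combination k3, by rw [hgP, hv₁p, hv₁P]; try ring⟩
          · have hvx : v x ≠ 0 := by rwa [hv₁x x h1 h2] at hx
            obtain ⟨l1, l2, l3, l4⟩ := hPg x hvx
            have hgp' : g x ≠ p := by
              intro hh
              exact h2 (by rw [hP, ← hh, l2])
            have hgP' : g x ≠ P := by
              intro hh
              apply h1
              have h5 := congrArg g hh
              rw [l2, hgP] at h5
              exact h5
            exact ⟨l1, l2, l3, by rw [hv₁x (g x) hgp' hgP', hv₁x x h1 h2]; exact l4⟩
      · intro z
        by_cases h1 : z = p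
        · subst h1
          rw [hτx p hpq (Ne.symm hPp), hv₁p, if_pos rfl, if_neg hpq]
          ring
        · by_cases h2 : z = q
          · subst h2
            rw [hτq, hv₁P, if_neg (Ne.symm hpq), if_pos rfl]
            linear_combination k3 - hsum
          · by_cases h3 : z = P
            · subst h3
              rw [hτP, hv₁x q (Ne.symm hpq) (fun hh => hPq hh.symm), if_neg hPp, if_neg hPq]
              linear_combination hsum - k3 + k4
            · rw [hτx z h2 h3, hv₁x z h1 h3, if_neg h1, if_neg h2]
              ring

lemma B2 {n : ℕ} {lam mu : Fin n → ℂ} {i j : Fin n} (hij : i ≠ j)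
    (h : AppQ n lam mu) (hlam0 : lam i + lam j = 0) :
    AppQ n (lam + (eps n i - eps n j)) mu := by
  obtain ⟨w, hw, v, hint, ⟨g, hPg⟩, hmu⟩ := h
  set lam' : Fin n → ℂ := lam + (eps n i - eps n j) with hlam'
  have hmux : ∀ x, mu x = lam (w x) - v (w x) := by intro x; rw [hmu]; rfl
  have hle : ∀ x, lam' x = lam x + ((if x = i then 1 else 0) - (if x = j then 1 else 0)) := by
    intro x; rw [hlam']; simp [eps]
  have hli : lam' i = lam i + 1 := by rw [hle]; simp [hij]
  have hlj : lam' j = lam j - 1 := by rw [hle]; simp [Ne.symm hij]; ring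
  have hlx : ∀ x, x ≠ i → x ≠ j → lam' x = lam x := by
    intro x h1 h2; rw [hle]; simp [h1, h2]
  have hIW : IntegralWeyl n lam' = IntegralWeyl n lam := by
    apply IW_shift
    intro x
    by_cases h1 : x = i
    · exact ⟨1, by rw [h1, hli]; norm_num⟩
    · by_cases h2 : x = j
      · exact ⟨-1, by rw [h2, hlj]; push_cast; ring⟩
      · exact ⟨0, by rw [hlx x h1 h2]; norm_num⟩
  have finish : ∀ (τ : Equiv.Perm (Fin n)), τ ∈ IntegralWeyl n lam →
      ∀ (v₂ : Fin n → ℂ), (∀ x, ∃ m : ℤ, v₂ x = (m : ℂ)) → (∃ g₂, Pg lam' v₂ g₂) →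
      (∀ z, lam' (τ z) - v₂ (τ z) = lam z - v z) →
      AppQ n lam' mu := by
    intro τ hτ v₂ hint₂ hg₂ key
    refine ⟨τ * w, by rw [hIW]; exact mul_mem hτ hw, v₂, hint₂, hg₂, ?_⟩
    funext x
    have hz := key (w x)
    show mu x = ((lam' - v₂) ∘ ⇑(τ * w)) x
    simp only [Function.comp_apply, Pi.sub_apply, Equiv.Perm.mul_apply]
    rw [hz, hmux x]
  by_cases hc : v i = 0
  · by_cases hd : v j = 0
    · -- Leaf A
      set v₂ : Fin n → ℂ := fun x => if x = i then 1 else if x = j then -1 else v x with hv₂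
      have hv₂i : v₂ i = 1 := by rw [hv₂]; simp
      have hv₂j : v₂ j = -1 := by rw [hv₂]; simp [Ne.symm hij]
      have hv₂x : ∀ x, x ≠ i → x ≠ j → v₂ x = v x := by
        intro x h1 h2; rw [hv₂]; simp [h1, h2]
      set g₂ : Fin n → Fin n := fun x => if x = i then j else if x = j then i else g x with hg₂
      have hg₂i : g₂ i = j := by rw [hg₂]; simp
      have hg₂j : g₂ j = i := by rw [hg₂]; simp [Ne.symm hij]
      have hg₂x : ∀ x, x ≠ i → x ≠ j → g₂ x = g x := by
        intro x h1 h2; rw [hg₂]; simp [h1, h2]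
      refine finish 1 (one_mem _) v₂ ?_ ⟨g₂, ?_⟩ ?_
      · intro x
        by_cases h1 : x = i
        · exact ⟨1, by rw [h1, hv₂i]; norm_num⟩
        · by_cases h2 : x = j
          · exact ⟨-1, by rw [h2, hv₂j]; push_cast; try ring⟩
          · rw [hv₂x x h1 h2]; exact hint x
      · intro x hx
        by_cases h1 : x = i
        · subst h1
          refine ⟨by rw [hg₂i]; exact Ne.symm hij, by rw [hg₂i, hg₂j], ?_,
            by rw [hg₂i, hv₂j, hv₂i]; try ring⟩
          rw [hg₂i, hli, hlj]; linear_combination hlam0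
        · by_cases h2 : x = j
          · subst h2
            refine ⟨by rw [hg₂j]; exact hij, by rw [hg₂j, hg₂i], ?_,
              by rw [hg₂j, hv₂i, hv₂j]; try ring⟩
            rw [hg₂j, hli, hlj]; linear_combination hlam0
          · have hvx : v x ≠ 0 := by rwa [hv₂x x h1 h2] at hx
            obtain ⟨l1, l2, l3, l4⟩ := hPg x hvx
            have hgi : g x ≠ i := by
              intro hh; apply hvx; rw [hh, hc] at l4; exact neg_eq_zero.mp l4.symm
            have hgj : g x ≠ j := by
              intro hh; apply hvx; rw [hh, hd] at l4; exact neg_eq_zero.mp l4.symm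
            refine ⟨by rw [hg₂x x h1 h2]; exact l1, ?_, ?_, ?_⟩
            · rw [hg₂x x h1 h2, hg₂x (g x) hgi hgj, l2]
            · rw [hg₂x x h1 h2, hlx x h1 h2, hlx (g x) hgi hgj]; exact l3
            · rw [hg₂x x h1 h2, hv₂x (g x) hgi hgj, hv₂x x h1 h2, l4]
      · intro z
        simp only [Equiv.Perm.one_apply]
        by_cases h1 : z = i
        · subst h1; rw [hli, hv₂i, hc]; ring
        · by_cases h2 : z = j
          · subst h2; rw [hlj, hv₂j, hd]; ring
          · rw [hlx z h1 h2, hv₂x z h1 h2]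
    · -- Leaf C' : v i = 0, v j ≠ 0
      obtain ⟨l1, l2, l3, l4⟩ := hPg j hd
      set J := g j with hJ
      have hJi : J ≠ i := by
        intro hh; apply hd; rw [hh, hc] at l4; exact neg_eq_zero.mp l4.symm
      have hJj : J ≠ j := l1
      have hgJ : g J = j := l2
      have hlamJ : lam J = lam i := by linear_combination l3 - hlam0
      set τ := Equiv.swap J i with hτ
      have hτJ : τ J = i := Equiv.swap_apply_left J i
      have hτi : τ i = J := Equiv.swap_apply_right J i
      have hτx : ∀ z, z ≠ J → z ≠ i → τ z = z := fun z h1 h2 =>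
        Equiv.swap_apply_of_ne_of_ne h1 h2
      have hτmem : τ ∈ IntegralWeyl n lam := by
        apply swap_mem_IW lam hJi
        exact ⟨0, by rw [hlamJ]; norm_num⟩
      set v₂ : Fin n → ℂ := fun x => if x = i then -(v j - 1) else if x = j then v j - 1
        else if x = J then v i else v x with hv₂
      have hv₂i : v₂ i = -(v j - 1) := by rw [hv₂]; simp
      have hv₂j : v₂ j = v j - 1 := by rw [hv₂]; simp [Ne.symm hij]
      have hv₂J : v₂ J = v i := by rw [hv₂]; simp [hJi, hJj]
      have hv₂x : ∀ x, x ≠ i → x ≠ j → x ≠ J → v₂ x = v x := by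
        intro x h1 h2 h3; rw [hv₂]; simp [h1, h2, h3]
      set g₂ : Fin n → Fin n := fun x => if x = i then j else if x = j then i else g x with hg₂
      have hg₂i : g₂ i = j := by rw [hg₂]; simp
      have hg₂j : g₂ j = i := by rw [hg₂]; simp [Ne.symm hij]
      have hg₂x : ∀ x, x ≠ i → x ≠ j → g₂ x = g x := by
        intro x h1 h2; rw [hg₂]; simp [h1, h2]
      refine finish τ hτmem v₂ ?_ ⟨g₂, ?_⟩ ?_
      · intro x
        obtain ⟨md, hmd⟩ := hint j
        by_cases h1 : x = i
        · exact ⟨-(md - 1), by rw [h1, hv₂i, hmd]; push_cast; try ring⟩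
        · by_cases h2 : x = j
          · exact ⟨md - 1, by rw [h2, hv₂j, hmd]; push_cast; try ring⟩
          · by_cases h3 : x = J
            · obtain ⟨mc, hmc⟩ := hint i
              exact ⟨mc, by rw [h3, hv₂J, hmc]⟩
            · rw [hv₂x x h1 h2 h3]; exact hint x
      · intro x hx
        by_cases h1 : x = i
        · subst h1
          refine ⟨by rw [hg₂i]; exact Ne.symm hij, by rw [hg₂i, hg₂j], ?_,
            by rw [hg₂i, hv₂j, hv₂i]; try ring⟩
          rw [hg₂i, hli, hlj]; linear_combination hlam0
        · by_cases h2 : x = j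
          · subst h2
            refine ⟨by rw [hg₂j]; exact hij, by rw [hg₂j, hg₂i], ?_,
              by rw [hg₂j, hv₂i, hv₂j]; try ring⟩
            rw [hg₂j, hli, hlj]; linear_combination hlam0
          · by_cases h3 : x = J
            · exfalso; apply hx; rw [h3, hv₂J, hc]
            · have hvx : v x ≠ 0 := by rwa [hv₂x x h1 h2 h3] at hx
              obtain ⟨m1, m2, m3, m4⟩ := hPg x hvx
              have hgi : g x ≠ i := by
                intro hh; apply hvx; rw [hh, hc] at m4; exact neg_eq_zero.mp m4.symm
              have hgj : g x ≠ j := by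
                intro hh; exact h3 (by rw [hJ, ← hh, m2])
              have hgJ' : g x ≠ J := by
                intro hh
                apply h2
                have h5 := congrArg g hh
                rw [m2, hgJ] at h5
                exact h5
              refine ⟨by rw [hg₂x x h1 h2]; exact m1, ?_, ?_, ?_⟩
              · rw [hg₂x x h1 h2, hg₂x (g x) hgi hgj, m2]
              · rw [hg₂x x h1 h2, hlx x h1 h2, hlx (g x) hgi hgj]; exact m3
              · rw [hg₂x x h1 h2, hv₂x (g x) hgi hgj hgJ', hv₂x x h1 h2 h3, m4]
      · intro z
        by_cases h1 : z = i
        · subst h1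
          rw [hτi, hlx J hJi hJj, hv₂J, hlamJ, hc]
        · by_cases h2 : z = j
          · rw [h2, hτx j (Ne.symm hJj) (Ne.symm hij), hlj, hv₂j]
            ring
          · by_cases h3 : z = J
            · subst h3
              rw [hτJ, hli, hv₂i]
              linear_combination l4 - hlamJ
            · rw [hτx z h3 h1, hlx z h1 h2, hv₂x z h1 h2 h3]
  · -- v i ≠ 0
    obtain ⟨k1, k2, k3, k4⟩ := hPg i hc
    set I := g i with hI
    have hIi : I ≠ i := k1
    have hgI : g I = i := k2
    have hlamI : lam I = lam j := by linear_combination k3 - hlam0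
    by_cases hIj : I = j
    · -- Leaf B : g i = j
      have hgij : g i = j := by rw [← hI, hIj]
      have hgji : g j = i := by rw [← hIj, hgI]
      have hvj : v j = - v i := by rw [← hIj]; exact k4
      set v₂ : Fin n → ℂ := fun x => if x = i then v i + 1 else if x = j then -(v i + 1)
        else v x with hv₂
      have hv₂i : v₂ i = v i + 1 := by rw [hv₂]; simp
      have hv₂j : v₂ j = -(v i + 1) := by rw [hv₂]; simp [Ne.symm hij]
      have hv₂x : ∀ x, x ≠ i → x ≠ j → v₂ x = v x := by
        intro x h1 h2; rw [hv₂]; simp [h1, h2]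
      refine finish 1 (one_mem _) v₂ ?_ ⟨g, ?_⟩ ?_
      · intro x
        obtain ⟨mc, hmc⟩ := hint i
        by_cases h1 : x = i
        · exact ⟨mc + 1, by rw [h1, hv₂i, hmc]; push_cast; try ring⟩
        · by_cases h2 : x = j
          · exact ⟨-(mc + 1), by rw [h2, hv₂j, hmc]; push_cast; try ring⟩
          · rw [hv₂x x h1 h2]; exact hint x
      · intro x hx
        by_cases h1 : x = i
        · subst h1
          refine ⟨by rw [hgij]; exact Ne.symm hij, by rw [hgij, hgji], ?_,
            by rw [hgij, hv₂j, hv₂i]; try ring⟩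
          rw [hgij, hli, hlj]; linear_combination hlam0
        · by_cases h2 : x = j
          · subst h2
            refine ⟨by rw [hgji]; exact hij, by rw [hgji, hgij], ?_,
              by rw [hgji, hv₂i, hv₂j]; try ring⟩
            rw [hgji, hli, hlj]; linear_combination hlam0
          · have hvx : v x ≠ 0 := by rwa [hv₂x x h1 h2] at hx
            obtain ⟨m1, m2, m3, m4⟩ := hPg x hvx
            have hgi : g x ≠ i := by
              intro hh
              apply h2
              have h5 := congrArg g hh
              rw [m2, hgij] at h5
              exact h5
            have hgj : g x ≠ j := by
              intro hh
              apply h1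
              have h5 := congrArg g hh
              rw [m2, hgji] at h5
              exact h5
            refine ⟨m1, m2, ?_, ?_⟩
            · rw [hlx x h1 h2, hlx (g x) hgi hgj]; exact m3
            · rw [hv₂x (g x) hgi hgj, hv₂x x h1 h2, m4]
      · intro z
        simp only [Equiv.Perm.one_apply]
        by_cases h1 : z = i
        · subst h1; rw [hli, hv₂i]; ring
        · by_cases h2 : z = j
          · subst h2; rw [hlj, hv₂j, hvj]; ring
          · rw [hlx z h1 h2, hv₂x z h1 h2]
    · -- Leaves C and D : v i ≠ 0, I = g i ∉ {i, j}
      set τ := Equiv.swap I j with hτ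
      have hτI : τ I = j := Equiv.swap_apply_left I j
      have hτj : τ j = I := Equiv.swap_apply_right I j
      have hτx : ∀ z, z ≠ I → z ≠ j → τ z = z := fun z h1 h2 =>
        Equiv.swap_apply_of_ne_of_ne h1 h2
      have hτmem : τ ∈ IntegralWeyl n lam := by
        apply swap_mem_IW lam hIj
        exact ⟨0, by rw [hlamI]; norm_num⟩
      set v₂ : Fin n → ℂ := fun x => if x = i then v i + 1 else if x = j then -(v i + 1)
        else if x = I then v j else v x with hv₂
      have hv₂i : v₂ i = v i + 1 := by rw [hv₂]; simp
      have hv₂j : v₂ j = -(v i + 1) := by rw [hv₂]; simp [Ne.symm hij]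
      have hv₂I : v₂ I = v j := by rw [hv₂]; simp [hIi, hIj]
      have hv₂x : ∀ x, x ≠ i → x ≠ j → x ≠ I → v₂ x = v x := by
        intro x h1 h2 h3; rw [hv₂]; simp [h1, h2, h3]
      have hint₂ : ∀ x, ∃ m : ℤ, v₂ x = (m : ℂ) := by
        intro x
        obtain ⟨mc, hmc⟩ := hint i
        by_cases h1 : x = i
        · exact ⟨mc + 1, by rw [h1, hv₂i, hmc]; push_cast; try ring⟩
        · by_cases h2 : x = j
          · exact ⟨-(mc + 1), by rw [h2, hv₂j, hmc]; push_cast; try ring⟩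
          · by_cases h3 : x = I
            · obtain ⟨md, hmd⟩ := hint j
              exact ⟨md, by rw [h3, hv₂I, hmd]⟩
            · rw [hv₂x x h1 h2 h3]; exact hint x
      have key : ∀ z, lam' (τ z) - v₂ (τ z) = lam z - v z := by
        intro z
        by_cases h1 : z = i
        · rw [h1, hτx i (Ne.symm hIi) hij, hli, hv₂i]; ring
        · by_cases h2 : z = j
          · subst h2
            rw [hτj, hlx I hIi hIj, hv₂I, hlamI]
          · by_cases h3 : z = I
            · subst h3
              rw [hτI, hlj, hv₂j]
              linear_combination k4 - hlamI
            · rw [hτx z h3 h2, hlx z h1 h2, hv₂x z h1 h2 h3]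
      by_cases hd : v j = 0
      · -- Leaf C
        set g₂ : Fin n → Fin n := fun x => if x = i then j else if x = j then i else g x with hg₂
        have hg₂i : g₂ i = j := by rw [hg₂]; simp
        have hg₂j : g₂ j = i := by rw [hg₂]; simp [Ne.symm hij]
        have hg₂x : ∀ x, x ≠ i → x ≠ j → g₂ x = g x := by
          intro x h1 h2; rw [hg₂]; simp [h1, h2]
        refine finish τ hτmem v₂ hint₂ ⟨g₂, ?_⟩ key
        intro x hx
        by_cases h1 : x = i
        · subst h1
          refine ⟨by rw [hg₂i]; exact Ne.symm hij, by rw [hg₂i, hg₂j], ?_,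
            by rw [hg₂i, hv₂j, hv₂i]; try ring⟩
          rw [hg₂i, hli, hlj]; linear_combination hlam0
        · by_cases h2 : x = j
          · subst h2
            refine ⟨by rw [hg₂j]; exact hij, by rw [hg₂j, hg₂i], ?_,
              by rw [hg₂j, hv₂i, hv₂j]; try ring⟩
            rw [hg₂j, hli, hlj]; linear_combination hlam0
          · by_cases h3 : x = I
            · exfalso; apply hx; rw [h3, hv₂I, hd]
            · have hvx : v x ≠ 0 := by rwa [hv₂x x h1 h2 h3] at hx
              obtain ⟨m1, m2, m3, m4⟩ := hPg x hvx
              have hgi : g x ≠ i := by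
                intro hh
                exact h3 (by rw [hI, ← hh, m2])
              have hgj : g x ≠ j := by
                intro hh; apply hvx; rw [hh, hd] at m4; exact neg_eq_zero.mp m4.symm
              have hgI' : g x ≠ I := by
                intro hh
                apply h1
                have h5 := congrArg g hh
                rw [m2, hgI] at h5
                exact h5
              refine ⟨by rw [hg₂x x h1 h2]; exact m1, ?_, ?_, ?_⟩
              · rw [hg₂x x h1 h2, hg₂x (g x) hgi hgj, m2]
              · rw [hg₂x x h1 h2, hlx x h1 h2, hlx (g x) hgi hgj]; exact m3
              · rw [hg₂x x h1 h2, hv₂x (g x) hgi hgj hgI', hv₂x x h1 h2 h3, m4]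
      · -- Leaf D
        obtain ⟨l1, l2, l3, l4⟩ := hPg j hd
        set J := g j with hJ
        have hJj : J ≠ j := l1
        have hgJ : g J = j := l2
        have hJi : J ≠ i := by
          intro hh
          apply hIj
          have h5 := congrArg g hh
          rw [hgJ, ← hI] at h5
          exact h5.symm
        have hIJ : I ≠ J := by
          intro hh
          apply hij
          have h5 := congrArg g hh
          rw [hgI, hgJ] at h5
          exact h5
        have hlamJ : lam J = lam i := by linear_combination l3 - hlam0
        have hv₂J : v₂ J = v J := hv₂x J hJi hJj (Ne.symm hIJ)
        set g₂ : Fin n → Fin n := fun x => if x = i then j else if x = j then i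
          else if x = I then J else if x = J then I else g x with hg₂
        have hg₂i : g₂ i = j := by rw [hg₂]; simp
        have hg₂j : g₂ j = i := by rw [hg₂]; simp [Ne.symm hij]
        have hg₂I : g₂ I = J := by rw [hg₂]; simp [hIi, hIj]
        have hg₂J : g₂ J = I := by rw [hg₂]; simp [hJi, hJj, Ne.symm hIJ]
        have hg₂x : ∀ x, x ≠ i → x ≠ j → x ≠ I → x ≠ J → g₂ x = g x := by
          intro x h1 h2 h3 h4; rw [hg₂]; simp [h1, h2, h3, h4]
        refine finish τ hτmem v₂ hint₂ ⟨g₂, ?_⟩ key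
        intro x hx
        by_cases h1 : x = i
        · subst h1
          refine ⟨by rw [hg₂i]; exact Ne.symm hij, by rw [hg₂i, hg₂j], ?_,
            by rw [hg₂i, hv₂j, hv₂i]; try ring⟩
          rw [hg₂i, hli, hlj]; linear_combination hlam0
        · by_cases h2 : x = j
          · subst h2
            refine ⟨by rw [hg₂j]; exact hij, by rw [hg₂j, hg₂i], ?_,
              by rw [hg₂j, hv₂i, hv₂j]; try ring⟩
            rw [hg₂j, hli, hlj]; linear_combination hlam0
          · by_cases h3 : x = I
            · subst h3
              refine ⟨by rw [hg₂I]; exact Ne.symm hIJ, by rw [hg₂I, hg₂J], ?_, ?_⟩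
              · rw [hg₂I, hlx I hIi hIj, hlx J hJi hJj, hlamI, hlamJ]
                linear_combination hlam0
              · rw [hg₂I, hv₂J, hv₂I, l4]
            · by_cases h4 : x = J
              · subst h4
                refine ⟨by rw [hg₂J]; exact hIJ, by rw [hg₂J, hg₂I], ?_, ?_⟩
                · rw [hg₂J, hlx I hIi hIj, hlx J hJi hJj, hlamI, hlamJ]
                  linear_combination hlam0
                · rw [hg₂J, hv₂I, hv₂J, l4]; ring
              · have hvx : v x ≠ 0 := by rwa [hv₂x x h1 h2 h3] at hx
                obtain ⟨m1, m2, m3, m4⟩ := hPg x hvx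
                have hgi : g x ≠ i := by
                  intro hh
                  exact h3 (by rw [hI, ← hh, m2])
                have hgj : g x ≠ j := by
                  intro hh
                  exact h4 (by rw [hJ, ← hh, m2])
                have hgI' : g x ≠ I := by
                  intro hh
                  apply h1
                  have h5 := congrArg g hh
                  rw [m2, hgI] at h5
                  exact h5
                have hgJ' : g x ≠ J := by
                  intro hh
                  apply h2
                  have h5 := congrArg g hh
                  rw [m2, hgJ] at h5
                  exact h5
                refine ⟨by rw [hg₂x x h1 h2 h3 h4]; exact m1, ?_, ?_, ?_⟩
                · rw [hg₂x x h1 h2 h3 h4, hg₂x (g x) hgi hgj hgI' hgJ', m2]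
                · rw [hg₂x x h1 h2 h3 h4, hlx x h1 h2, hlx (g x) hgi hgj]; exact m3
                · rw [hg₂x x h1 h2 h3 h4, hv₂x (g x) hgi hgj hgI', hv₂x x h1 h2 h3, m4]

lemma alpha_swap {n : ℕ} {i j : Fin n} (hij : i ≠ j) (x : Fin n) :
    (eps n i - eps n j) (Equiv.swap i j x) = - (eps n i - eps n j) x := by
  rcases eq_or_ne x i with rfl | h1
  · rw [Equiv.swap_apply_left]
    simp [eps, hij, Ne.symm hij]
  · rcases eq_or_ne x j with rfl | h2
    · rw [Equiv.swap_apply_right]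
      simp [eps, hij, Ne.symm hij]
    · rw [Equiv.swap_apply_of_ne_of_ne h1 h2]
      simp [eps, h1, h2]

/-- For a simple root `α = ε_i - ε_{i+1}` and the star action
`s_α ∗ ζ = s_α ζ` if `(ζ, ᾱ) ≠ 0` and `s_α ∗ ζ = s_α ζ - α` otherwise, we have
`s_α ∗ ζ ≈ s_α ∗ ζ'` if and only if `ζ ≈ ζ'`. -/
theorem stmt1 {n : ℕ} (i : Fin n) (h : i.val + 1 < n) (zeta zeta' : Fin n → ℂ) :
    let j : Fin n := ⟨i.val + 1, h⟩
    let α : Fin n → ℂ := eps n i - eps n j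
    let star : (Fin n → ℂ) → (Fin n → ℂ) := fun ζ =>
      if pform ζ (eps n i + eps n j) ≠ 0 then ζ ∘ Equiv.swap i j
      else ζ ∘ Equiv.swap i j - α
    (approx n (star zeta) (star zeta') ↔ approx n zeta zeta') := by

  intro j α star
  have hij : i ≠ j := by
    intro hh
    have h2 : (i : ℕ) = (i : ℕ) + 1 := congrArg Fin.val hh
    omega
  have halpha : ∀ x, α (Equiv.swap i j x) = - α x := alpha_swap hij
  have hstar : ∀ ζ, star ζ = if pform ζ (eps n i + eps n j) ≠ 0 then ζ ∘ Equiv.swap i j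
      else ζ ∘ Equiv.swap i j - α := fun ζ => rfl
  have hstar_pos : ∀ ζ, pform ζ (eps n i + eps n j) ≠ 0 →
      star ζ = ζ ∘ Equiv.swap i j := by
    intro ζ hz; rw [hstar, if_pos hz]
  have hstar_neg : ∀ ζ, pform ζ (eps n i + eps n j) = 0 →
      star ζ = ζ ∘ Equiv.swap i j - α := by
    intro ζ hz; rw [hstar, if_neg (fun hh => hh hz)]
  have hstar_neg' : ∀ ζ, pform ζ (eps n i + eps n j) = 0 →
      star ζ = (ζ + α) ∘ (Equiv.swap i j : Equiv.Perm (Fin n)) := by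
    intro ζ hz
    rw [hstar_neg ζ hz]
    funext x
    have hsw : Equiv.swap i j (Equiv.swap i j x) = x := Equiv.swap_apply_self i j x
    simp only [Pi.sub_apply, Pi.add_apply, Function.comp_apply, hsw]
    rw [halpha x]
    ring
  have hpform_star : ∀ ζ, pform (star ζ) (eps n i + eps n j) = pform ζ (eps n i + eps n j) := by
    intro ζ
    rw [pform_eps_add, pform_eps_add]
    by_cases hz : pform ζ (eps n i + eps n j) = 0
    · rw [hstar_neg ζ hz]
      simp only [Pi.sub_apply, Function.comp_apply, Equiv.swap_apply_left,
        Equiv.swap_apply_right]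
      have e1 : α i = 1 := by simp [α, eps, hij, Ne.symm hij]
      have e2 : α j = -1 := by simp [α, eps, hij, Ne.symm hij]
      rw [e1, e2]
      ring
    · rw [hstar_pos ζ hz]
      simp only [Function.comp_apply, Equiv.swap_apply_left, Equiv.swap_apply_right]
      ring
  have hstar_star : ∀ ζ, star (star ζ) = ζ := by
    intro ζ
    by_cases hz : pform ζ (eps n i + eps n j) = 0
    · have hz2 : pform (star ζ) (eps n i + eps n j) = 0 := by rw [hpform_star]; exact hz
      rw [hstar_neg' (star ζ) hz2, hstar_neg' ζ hz]
      funext x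
      simp only [Pi.add_apply, Function.comp_apply, Equiv.swap_apply_self]
      rw [halpha x]
      ring
    · have hz2 : pform (star ζ) (eps n i + eps n j) ≠ 0 := by rw [hpform_star]; exact hz
      rw [hstar_pos (star ζ) hz2, hstar_pos ζ hz]
      funext x
      simp only [Function.comp_apply, Equiv.swap_apply_self]
  have fwd : ∀ ζ ζ', approx n ζ ζ' → approx n (star ζ) (star ζ') := by
    intro ζ ζ' hzz
    have h1 : AppQ n ζ ζ' := approx_to_AppQ hzz
    -- stage 1 : mu side
    have h2 : ∃ Z', AppQ n ζ Z' ∧ star ζ' = Z' ∘ (Equiv.swap i j : Equiv.Perm (Fin n)) := by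
      by_cases hz' : pform ζ' (eps n i + eps n j) = 0
      · have hmu0 : ζ' i + ζ' j = 0 := by rwa [pform_eps_add] at hz'
        exact ⟨ζ' + (eps n i - eps n j), B1 hij h1 hmu0, hstar_neg' ζ' hz'⟩
      · exact ⟨ζ', h1, hstar_pos ζ' hz'⟩
    obtain ⟨Z', h2, hZ'⟩ := h2
    -- stage 2 : lam side
    have h3 : ∃ Z, AppQ n Z Z' ∧ star ζ = Z ∘ (Equiv.swap i j : Equiv.Perm (Fin n)) := by
      by_cases hz : pform ζ (eps n i + eps n j) = 0
      · have hlam0 : ζ i + ζ j = 0 := by rwa [pform_eps_add] at hz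
        exact ⟨ζ + (eps n i - eps n j), B2 hij h2 hlam0, hstar_neg' ζ hz⟩
      · exact ⟨ζ, h2, hstar_pos ζ hz⟩
    obtain ⟨Z, h3, hZ⟩ := h3
    have h4 := AppQ_comp (Equiv.swap i j) h3
    rw [← hZ, ← hZ'] at h4
    exact AppQ_to_approx h4
  constructor
  · intro hss
    have h5 := fwd _ _ hss
    rwa [hstar_star, hstar_star] at h5
  · exact fun hzz => fwd _ _ hzz

end
end

section
/- Let s ∈ ℂ with 2s ∉ ℤ, 0 ≤ ℓ ≤ n, and let λ ∈ Λ⁺_{s^ℓ}(n) with ♯λ = 1; let (p,q) with p ≤ ℓ < q be the unique pair with λ_p + λ_q = 0 and set α = ε_p − ε_q. Then: (i) there exist a positive integer k and σ ∈ S_n with σ(λ − kα) ∈ Λ⁺_{s^ℓ}(n); (ii) for the smallest such k, the element λ⁻ := σ(λ − kα) ∈ Λ⁺_{s^ℓ}(n) does not depend on the choice of σ; (iii) ♯λ⁻ = 1; (iv) λ ≈ λ⁻. -/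
open Finset

noncomputable section

/-- Membership in `Λ_{s^ℓ}(n)` (indices written `0`-based: the first `ℓ` coordinates are
congruent to `s` mod `ℤ`, the remaining ones to `-s`). -/
def InLambda (n ℓ : ℕ) (s : ℂ) (lam : Fin n → ℂ) : Prop :=
  ∀ i : Fin n, (i.val < ℓ → ∃ m : ℤ, lam i - s = (m : ℂ)) ∧
    (ℓ ≤ i.val → ∃ m : ℤ, lam i + s = (m : ℂ))

/-- Membership in `Λ⁺_{s^ℓ}(n)`: membership in `Λ_{s^ℓ}(n)` together with
`λ_i - λ_{i+1} ∈ ℤ_{>0}` for consecutive indices inside `{1,…,ℓ}` or inside `{ℓ+1,…,n}`. -/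
def InLambdaPlus (n ℓ : ℕ) (s : ℂ) (lam : Fin n → ℂ) : Prop :=
  InLambda n ℓ s lam ∧
    ∀ i : Fin n, ∀ h : i.val + 1 < n,
      (i.val + 1 < ℓ ∨ ℓ ≤ i.val) → ∃ m : ℤ, 0 < m ∧ lam i - lam ⟨i.val + 1, h⟩ = (m : ℂ)

open scoped Classical in
/-- The atypicality degree `♯λ`: the number of pairs `(i,j)` with `i ≤ ℓ < j`
(`1`-based) and `λ_i + λ_j = 0`. -/
def atyp (n ℓ : ℕ) (lam : Fin n → ℂ) : ℕ :=
  ((Finset.univ : Finset (Fin n × Fin n)).filter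
    (fun pq => pq.1.val < ℓ ∧ ℓ ≤ pq.2.val ∧ lam pq.1 + lam pq.2 = 0)).card

/-- same-block integer difference -/
lemma intdiff {n ℓ : ℕ} {s : ℂ} {f : Fin n → ℂ} (hf : InLambda n ℓ s f) (i j : Fin n)
    (h : (i.val < ℓ ↔ j.val < ℓ)) : ∃ m : ℤ, f i - f j = (m : ℂ) := by
  by_cases hi : i.val < ℓ
  · obtain ⟨m1, hm1⟩ := (hf i).1 hi
    obtain ⟨m2, hm2⟩ := (hf j).1 (h.mp hi)
    exact ⟨m1 - m2, by push_cast; rw [← hm1, ← hm2]; ring⟩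
  · obtain ⟨m1, hm1⟩ := (hf i).2 (not_lt.mp hi)
    obtain ⟨m2, hm2⟩ := (hf j).2 (not_lt.mp (fun hj => hi (h.mpr hj)))
    exact ⟨m1 - m2, by push_cast; rw [← hm1, ← hm2]; ring⟩

lemma pos_intdiff_aux {n ℓ : ℕ} {s : ℂ} {f : Fin n → ℂ} (hf : InLambdaPlus n ℓ s f) :
    ∀ d : ℕ, ∀ i j : Fin n, j.val = i.val + d + 1 → (j.val < ℓ ∨ ℓ ≤ i.val) →
      ∃ m : ℤ, 0 < m ∧ f i - f j = (m : ℂ) := by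
  intro d
  induction d with
  | zero =>
    intro i j hij hside
    have h1 : i.val + 1 < n := hij ▸ j.isLt
    have : j = ⟨i.val + 1, h1⟩ := by ext; simp [hij]
    subst this
    exact hf.2 i h1 (by omega)
  | succ d ih =>
    intro i j hij hside
    have h1 : i.val + 1 < n := by omega
    set i' : Fin n := ⟨i.val + 1, h1⟩ with hi'
    obtain ⟨m1, hm1, he1⟩ := hf.2 i h1 (by omega)
    obtain ⟨m2, hm2, he2⟩ := ih i' j (by show j.val = i.val + 1 + d + 1; omega)
      (by show j.val < ℓ ∨ ℓ ≤ i.val + 1; omega)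
    exact ⟨m1 + m2, by omega, by push_cast; rw [← he1, ← he2]; ring⟩

lemma pos_intdiff {n ℓ : ℕ} {s : ℂ} {f : Fin n → ℂ} (hf : InLambdaPlus n ℓ s f)
    {i j : Fin n} (hij : i.val < j.val) (hside : j.val < ℓ ∨ ℓ ≤ i.val) :
    ∃ m : ℤ, 0 < m ∧ f i - f j = (m : ℂ) :=
  pos_intdiff_aux hf (j.val - i.val - 1) i j (by omega) hside

/-- injectivity within a block -/
lemma inj_block {n ℓ : ℕ} {s : ℂ} {f : Fin n → ℂ} (hf : InLambdaPlus n ℓ s f)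
    {i j : Fin n} (h : (i.val < ℓ ↔ j.val < ℓ)) (hv : f i = f j) : i = j := by
  rcases lt_trichotomy i.val j.val with hlt | heq | hgt
  · obtain ⟨m, hm, he⟩ := pos_intdiff hf hlt (by omega)
    rw [hv, sub_self] at he
    exact absurd he.symm (by exact_mod_cast hm.ne')
  · exact Fin.ext heq
  · obtain ⟨m, hm, he⟩ := pos_intdiff hf hgt (by omega)
    rw [hv, sub_self] at he
    exact absurd he.symm (by exact_mod_cast hm.ne')

/-- block preservation -/
lemma block_pres {n ℓ : ℕ} {s : ℂ} (hs : ∀ m : ℤ, 2 * s ≠ (m : ℂ)) {lam g : Fin n → ℂ}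
    (hlam : InLambda n ℓ s lam) (σ : Equiv.Perm (Fin n))
    (hint : ∀ t, ∃ m : ℤ, g t - lam t = (m : ℂ))
    (hg : InLambda n ℓ s (g ∘ σ)) :
    ∀ i : Fin n, i.val < ℓ ↔ (σ i).val < ℓ := by
  intro i
  constructor
  · intro hi
    by_contra hσ
    obtain ⟨m, hm⟩ := (hg i).1 hi
    obtain ⟨m2, hm2⟩ := (hlam (σ i)).2 (not_lt.mp hσ)
    obtain ⟨m3, hm3⟩ := hint (σ i)
    have heq : 2 * s = ((m2 - m + m3 : ℤ) : ℂ) := by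
      simp only [Function.comp_apply] at hm
      push_cast
      linear_combination hm2 - hm + hm3
    exact hs _ heq
  · intro hσ
    by_contra hi
    obtain ⟨m, hm⟩ := (hg i).2 (not_lt.mp hi)
    obtain ⟨m2, hm2⟩ := (hlam (σ i)).1 hσ
    obtain ⟨m3, hm3⟩ := hint (σ i)
    have heq : 2 * s = ((m - m2 - m3 : ℤ) : ℂ) := by
      simp only [Function.comp_apply] at hm
      push_cast
      linear_combination hm - hm2 - hm3
    exact hs _ heq

/-- a permutation moving every point within its `r`-class lies in the closure of
`r`-compatible swaps -/
lemma perm_mem_closure {n : ℕ} (r : Fin n → Fin n → Prop)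
    (hsymm : ∀ {i j}, r i j → r j i) (htrans : ∀ {i j k}, r i j → r j k → r i k)
    (S : Set (Equiv.Perm (Fin n))) (hS : ∀ i j, i ≠ j → r i j → Equiv.swap i j ∈ S) :
    ∀ (c : ℕ) (σ : Equiv.Perm (Fin n)), σ.support.card ≤ c → (∀ i, r i (σ i)) →
      σ ∈ Subgroup.closure S := by
  intro c
  induction c with
  | zero =>
    intro σ hc _
    have : σ = 1 := by
      rwa [Nat.le_zero, Finset.card_eq_zero, Equiv.Perm.support_eq_empty_iff] at hc
    rw [this]; exact one_mem _
  | succ c ih =>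
    intro σ hc hσ
    by_cases h1 : σ = 1
    · rw [h1]; exact one_mem _
    · obtain ⟨i, hi⟩ : ∃ i, σ i ≠ i := by
        by_contra hcon
        push_neg at hcon
        exact h1 (Equiv.ext hcon)
      set τ := Equiv.swap i (σ i) * σ with hτdef
      have hcard : τ.support.card < σ.support.card := Equiv.Perm.card_support_swap_mul hi
      have hτ : ∀ k, r k (τ k) := by
        intro k
        have hk := hσ k
        by_cases h2 : σ k = i
        · have : τ k = σ i := by simp [hτdef, h2]
          rw [this]
          exact htrans (h2 ▸ hk) (hσ i)
        · by_cases h3 : σ k = σ i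
          · have hki : k = i := σ.injective h3
            have : τ k = i := by simp [hτdef, h3]
            rw [this, hki]
            exact htrans (hσ i) (hsymm (hσ i))
          · have : τ k = σ k := by
              simp [hτdef, Equiv.swap_apply_of_ne_of_ne h2 h3]
            rw [this]; exact hk
      have hτmem := ih τ (by omega) hτ
      have hστ : σ = Equiv.swap i (σ i) * τ := by
        rw [hτdef, ← mul_assoc, Equiv.swap_mul_self, one_mul]
      rw [hστ]
      exact mul_mem (Subgroup.subset_closure (hS i (σ i) (Ne.symm hi) (hσ i))) hτmem

/-- a strictly monotone permutation of `Fin n` is the identity -/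
lemma perm_strictMono_eq_id {n : ℕ} (τ : Equiv.Perm (Fin n))
    (h : StrictMono (τ : Fin n → Fin n)) : ∀ i, τ i = i := by
  have hr : Set.range (τ : Fin n → Fin n) = Set.range (id : Fin n → Fin n) := by
    rw [Set.range_id]
    exact Set.range_eq_univ.mpr τ.surjective
  haveI : WellFoundedLT (Fin n) := inferInstance
  have := (StrictMono.range_inj (g := (id : Fin n → Fin n)) h strictMono_id).mp hr
  intro i; exact congrFun this i

lemma card_filter_lt_block {n ℓ : ℕ} (hl : ℓ ≤ n) :
    (Finset.univ.filter (fun j : Fin n => j.val < ℓ)).card = ℓ := by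
  classical
  have : Finset.univ.filter (fun j : Fin n => j.val < ℓ) =
      Finset.univ.map ⟨Fin.castLE hl, Fin.castLE_injective hl⟩ := by
    ext j
    simp only [Finset.mem_filter, Finset.mem_univ, true_and, Finset.mem_map,
      Function.Embedding.coeFn_mk]
    constructor
    · intro hj
      refine ⟨⟨j.val, hj⟩, ?_⟩
      ext
      simp
    · rintro ⟨i, rfl⟩
      exact i.isLt
  rw [this, Finset.card_map, Finset.card_univ, Fintype.card_fin]

lemma sort_exists {n ℓ : ℕ} (hl : ℓ ≤ n) {s : ℂ} {f : Fin n → ℂ}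
    (hf : InLambda n ℓ s f)
    (hinj : ∀ i j : Fin n, (i.val < ℓ ↔ j.val < ℓ) → f i = f j → i = j) :
    ∃ σ : Equiv.Perm (Fin n), InLambdaPlus n ℓ s (f ∘ σ) := by
  classical
  set key : Fin n → ℕ ×ₗ ℝ := fun i => toLex (if i.val < ℓ then 0 else 1, -(f i).re)
    with hkey
  set σ := Tuple.sort key with hσdef
  have hmono : Monotone (key ∘ σ) := Tuple.monotone_sort key
  have hlow : ∀ i j : Fin n, i ≤ j → (σ j).val < ℓ → (σ i).val < ℓ := by
    intro i j hij hj
    have hm := hmono hij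
    simp only [Function.comp_apply, hkey] at hm
    rw [Prod.Lex.le_iff] at hm
    rcases hm with h | h
    · simp only [if_pos hj] at h
      exact absurd h (Nat.not_lt_zero _)
    · by_contra hc
      have h1 := h.1
      rw [if_neg hc, if_pos hj] at h1
      exact absurd h1 (by norm_num)
  have hcard : (Finset.univ.filter (fun i : Fin n => (σ i).val < ℓ)).card = ℓ := by
    have heq : (Finset.univ.filter (fun i : Fin n => (σ i).val < ℓ)).card =
        (Finset.univ.filter (fun j : Fin n => j.val < ℓ)).card := by
      apply Finset.card_nbij' (fun i => σ i) (fun j => σ.symm j)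
      · intro a ha
        simp only [Finset.mem_filter, Finset.mem_univ, true_and] at *
        simpa using ha
      · intro a ha
        simp only [Finset.mem_filter, Finset.mem_univ, true_and] at *
        simpa using ha
      · intro a _
        simp
      · intro a _
        simp
    rw [heq, card_filter_lt_block (n := n) hl]
  have hblock : ∀ i : Fin n, i.val < ℓ ↔ (σ i).val < ℓ := by
    intro i
    constructor
    · intro hi
      by_contra hc
      have hsub : Finset.univ.filter (fun j : Fin n => (σ j).val < ℓ) ⊆ Finset.Iio i := by
        intro j hj
        simp only [Finset.mem_filter] at hj
        rw [Finset.mem_Iio]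
        by_contra hji
        exact hc (hlow i j (not_lt.mp hji) hj.2)
      have hle := Finset.card_le_card hsub
      rw [hcard, Fin.card_Iio] at hle
      omega
    · intro hi
      have hsub : Finset.Iic i ⊆ Finset.univ.filter (fun j : Fin n => (σ j).val < ℓ) := by
        intro j hj
        simp only [Finset.mem_Iic] at hj
        simp only [Finset.mem_filter, Finset.mem_univ, true_and]
        exact hlow j i hj hi
      have hle := Finset.card_le_card hsub
      rw [hcard, Fin.card_Iic] at hle
      omega
  refine ⟨σ, ⟨?_, ?_⟩⟩
  · intro i
    constructor
    · intro hi
      exact (hf (σ i)).1 ((hblock i).mp hi)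
    · intro hi
      refine (hf (σ i)).2 (not_lt.mp fun hc => ?_)
      have := (hblock i).mpr hc
      omega
  · intro i h hside
    set j : Fin n := ⟨i.val + 1, h⟩ with hjdef
    have hijle : i ≤ j := by
      rw [Fin.le_def]
      simp [hjdef]
    have hsame : i.val < ℓ ↔ j.val < ℓ := by
      simp only [hjdef]
      omega
    have hsame2 : (σ i).val < ℓ ↔ (σ j).val < ℓ := by
      rw [← hblock i, ← hblock j]
      exact hsame
    have hre : (f (σ j)).re ≤ (f (σ i)).re := by
      have hm := hmono hijle
      simp only [Function.comp_apply, hkey] at hm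
      rw [Prod.Lex.le_iff] at hm
      rcases hm with h' | h'
      · exfalso
        by_cases hb : (σ i).val < ℓ
        · rw [if_pos hb, if_pos (hsame2.mp hb)] at h'
          exact absurd h' (by norm_num)
        · rw [if_neg hb, if_neg (fun hh => hb (hsame2.mpr hh))] at h'
          exact absurd h' (by norm_num)
      · have := h'.2
        simpa using this
    obtain ⟨m, hm⟩ := intdiff hf (σ i) (σ j) hsame2
    have hne : σ i ≠ σ j := by
      intro hc
      have hij := σ.injective hc
      rw [Fin.ext_iff] at hij
      simp [hjdef] at hij
    have hm0 : m ≠ 0 := by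
      intro hc
      rw [hc] at hm
      push_cast at hm
      exact hne (hinj _ _ hsame2 (sub_eq_zero.mp hm))
    have hmre : (f (σ i)).re - (f (σ j)).re = (m : ℝ) := by
      have := congrArg Complex.re hm
      simpa using this
    have hmpos : 0 < m := by
      have h0 : (0:ℝ) ≤ (m:ℝ) := by linarith
      have : 0 ≤ m := by exact_mod_cast h0
      omega
    exact ⟨m, hmpos, by simpa using hm⟩
/-- Let `2s ∉ ℤ`, `λ ∈ Λ⁺_{s^ℓ}(n)` with `♯λ = 1`, and let `(p,q)` with
`p ≤ ℓ < q` be the unique pair with `λ_p + λ_q = 0`; set `α = ε_p - ε_q`. Then: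
(i) there are a positive integer `k` and `σ ∈ S_n` with `σ(λ - kα) ∈ Λ⁺_{s^ℓ}(n)`;
and for the smallest such `k`: (ii) `λ⁻ := σ(λ - kα)` does not depend on the choice of `σ`;
(iii) `♯λ⁻ = 1`; (iv) `λ ≈ λ⁻`. -/
theorem stmt6 {n ℓ : ℕ} (hl : ℓ ≤ n) (s : ℂ) (hs : ∀ m : ℤ, 2 * s ≠ (m : ℂ))
    (lam : Fin n → ℂ) (hlam : InLambdaPlus n ℓ s lam) (hatyp : atyp n ℓ lam = 1)
    (p q : Fin n) (hp : p.val < ℓ) (hq : ℓ ≤ q.val) (hpq : lam p + lam q = 0) :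
    let α : Fin n → ℂ := eps n p - eps n q
    (∃ k : ℕ, 0 < k ∧ ∃ σ : Equiv.Perm (Fin n),
        InLambdaPlus n ℓ s ((lam - (k : ℂ) • α) ∘ σ)) ∧
    (∀ k : ℕ, 0 < k →
      (∃ σ : Equiv.Perm (Fin n), InLambdaPlus n ℓ s ((lam - (k : ℂ) • α) ∘ σ)) →
      (∀ k' : ℕ, 0 < k' →
        (∃ σ : Equiv.Perm (Fin n), InLambdaPlus n ℓ s ((lam - (k' : ℂ) • α) ∘ σ)) →
        k ≤ k') →
      ∀ σ : Equiv.Perm (Fin n), InLambdaPlus n ℓ s ((lam - (k : ℂ) • α) ∘ σ) →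
        (∀ σ' : Equiv.Perm (Fin n), InLambdaPlus n ℓ s ((lam - (k : ℂ) • α) ∘ σ') →
          (lam - (k : ℂ) • α) ∘ σ' = (lam - (k : ℂ) • α) ∘ σ) ∧
        atyp n ℓ ((lam - (k : ℂ) • α) ∘ σ) = 1 ∧
        approx n lam ((lam - (k : ℂ) • α) ∘ σ)) := by
  intro α
  classical
  have hpqne : p ≠ q := fun h => by rw [h] at hp; omega
  -- values of μ_k := lam - k • α
  have hmu_p : ∀ k : ℕ, (lam - (k : ℂ) • α) p = lam p - k := by
    intro k
    simp [α, eps, hpqne, Pi.sub_apply, Pi.smul_apply, smul_eq_mul]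
  have hmu_q : ∀ k : ℕ, (lam - (k : ℂ) • α) q = lam q + k := by
    intro k
    simp [α, eps, Ne.symm hpqne, Pi.sub_apply, Pi.smul_apply, smul_eq_mul]
  have hmu_other : ∀ (k : ℕ) (t : Fin n), t ≠ p → t ≠ q → (lam - (k : ℂ) • α) t = lam t := by
    intro k t h1 h2
    simp [α, eps, h1, h2, Pi.sub_apply, Pi.smul_apply]
  have hint : ∀ (k : ℕ) (t : Fin n), ∃ m : ℤ, (lam - (k : ℂ) • α) t - lam t = (m : ℂ) := by
    intro k t
    by_cases h1 : t = p
    · subst h1; exact ⟨-k, by rw [hmu_p k]; push_cast; ring⟩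
    · by_cases h2 : t = q
      · subst h2; exact ⟨k, by rw [hmu_q k]; push_cast; ring⟩
      · exact ⟨0, by rw [hmu_other k t h1 h2]; push_cast; ring⟩
  have hmuL : ∀ k : ℕ, InLambda n ℓ s (lam - (k : ℂ) • α) := by
    intro k i
    obtain ⟨m3, h3⟩ := hint k i
    constructor
    · intro hi
      obtain ⟨m, hm⟩ := (hlam.1 i).1 hi
      exact ⟨m + m3, by push_cast; linear_combination hm + h3⟩
    · intro hi
      obtain ⟨m, hm⟩ := (hlam.1 i).2 hi
      exact ⟨m + m3, by push_cast; linear_combination hm + h3⟩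
  -- the λ-filter is the singleton {(p,q)}
  have hmem_pq : (p, q) ∈ (Finset.univ : Finset (Fin n × Fin n)).filter
      (fun pq => pq.1.val < ℓ ∧ ℓ ≤ pq.2.val ∧ lam pq.1 + lam pq.2 = 0) := by
    simp [hp, hq, hpq]
  have huniq : ∀ a b : Fin n, a.val < ℓ → ℓ ≤ b.val → lam a + lam b = 0 → a = p ∧ b = q := by
    intro a b ha hb hab
    obtain ⟨x, hx⟩ := Finset.card_eq_one.mp hatyp
    have h1 : (a, b) ∈ (Finset.univ : Finset (Fin n × Fin n)).filter
        (fun pq => pq.1.val < ℓ ∧ ℓ ≤ pq.2.val ∧ lam pq.1 + lam pq.2 = 0) := by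
      simp [ha, hb, hab]
    rw [hx, Finset.mem_singleton] at h1 hmem_pq
    have := h1.trans hmem_pq.symm
    exact ⟨congrArg Prod.fst this, congrArg Prod.snd this⟩
  -- part (i): find a good k
  have hpart1 : ∃ k : ℕ, 0 < k ∧ ∃ σ : Equiv.Perm (Fin n),
      InLambdaPlus n ℓ s ((lam - (k : ℂ) • α) ∘ σ) := by
    set Bad : ℕ → Prop := fun k => ∃ i : Fin n,
      (i.val < ℓ ∧ i ≠ p ∧ lam i = lam p - k) ∨ (ℓ ≤ i.val ∧ i ≠ q ∧ lam i = lam q + k)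
      with hBad
    have hcard1 : ((Finset.Icc 1 (n + 1)).filter Bad).card < (Finset.Icc 1 (n + 1)).card := by
      have hmapsto : ∀ k ∈ (Finset.Icc 1 (n + 1)).filter Bad,
          (if h : Bad k then h.choose else p) ∈ (Finset.univ : Finset (Fin n)) :=
        fun _ _ => Finset.mem_univ _
      have hinjon : Set.InjOn (fun k => if h : Bad k then h.choose else p)
          ((Finset.Icc 1 (n + 1)).filter Bad) := by
        intro k1 hk1 k2 hk2 he
        simp only [Finset.coe_filter, Set.mem_setOf_eq] at hk1 hk2
        have hb1 := hk1.2
        have hb2 := hk2.2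
        simp only [dif_pos hb1, dif_pos hb2] at he
        have hs1 := hb1.choose_spec
        have hs2 := hb2.choose_spec
        rw [he] at hs1
        rcases hs1 with ⟨h1a, h1b, h1c⟩ | ⟨h1a, h1b, h1c⟩ <;>
          rcases hs2 with ⟨h2a, h2b, h2c⟩ | ⟨h2a, h2b, h2c⟩
        · have : ((k1 : ℂ)) = (k2 : ℂ) := by linear_combination h1c - h2c
          exact_mod_cast this
        · omega
        · omega
        · have : ((k1 : ℂ)) = (k2 : ℂ) := by linear_combination h2c - h1c
          exact_mod_cast this
      have h1 := Finset.card_le_card_of_injOn _ hmapsto hinjon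
      rw [Finset.card_univ, Fintype.card_fin] at h1
      rw [Nat.card_Icc]
      omega
    obtain ⟨k, hkIcc, hknot⟩ : ∃ k ∈ Finset.Icc 1 (n + 1),
        k ∉ (Finset.Icc 1 (n + 1)).filter Bad := by
      by_contra hcon
      push_neg at hcon
      have : Finset.Icc 1 (n + 1) ⊆ (Finset.Icc 1 (n + 1)).filter Bad := hcon
      have := Finset.card_le_card this
      omega
    have hkpos : 0 < k := by
      rw [Finset.mem_Icc] at hkIcc
      omega
    have hnotbad : ¬ Bad k := fun hb => hknot (Finset.mem_filter.mpr ⟨hkIcc, hb⟩)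
    refine ⟨k, hkpos, ?_⟩
    apply sort_exists hl (hmuL k)
    intro i j hij hv
    by_contra hne
    apply hnotbad
    by_cases hiℓ : i.val < ℓ
    · -- block 1 : i,j < ℓ, neither is q
      have hjℓ : j.val < ℓ := hij.mp hiℓ
      have hiq : i ≠ q := fun h => by rw [h] at hiℓ; omega
      have hjq : j ≠ q := fun h => by rw [h] at hjℓ; omega
      by_cases hip : i = p
      · have hjp : j ≠ p := fun h => hne (hip.trans h.symm)
        rw [hip] at hv
        rw [hmu_p k, hmu_other k j hjp hjq] at hv
        exact ⟨j, Or.inl ⟨hjℓ, hjp, by linear_combination -hv⟩⟩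
      · by_cases hjp : j = p
        · subst hjp
          refine ⟨i, Or.inl ⟨hiℓ, hip, ?_⟩⟩
          rw [hmu_p k, hmu_other k i hip hiq] at hv
          linear_combination hv
        · rw [hmu_other k i hip hiq, hmu_other k j hjp hjq] at hv
          exact absurd (inj_block hlam hij hv) hne
    · -- block 2
      have hjℓ : ¬ j.val < ℓ := fun h => hiℓ (hij.mpr h)
      have hip : i ≠ p := fun h => by rw [h] at hiℓ; omega
      have hjp : j ≠ p := fun h => by rw [h] at hjℓ; omega
      by_cases hiq : i = q
      · have hjq : j ≠ q := fun h => hne (hiq.trans h.symm)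
        rw [hiq] at hv
        rw [hmu_q k, hmu_other k j hjp hjq] at hv
        exact ⟨j, Or.inr ⟨not_lt.mp hjℓ, hjq, by linear_combination -hv⟩⟩
      · by_cases hjq : j = q
        · subst hjq
          refine ⟨i, Or.inr ⟨not_lt.mp hiℓ, hiq, ?_⟩⟩
          rw [hmu_q k, hmu_other k i hip hiq] at hv
          linear_combination hv
        · rw [hmu_other k i hip hiq, hmu_other k j hjp hjq] at hv
          exact absurd (inj_block hlam hij hv) hne
  refine ⟨hpart1, ?_⟩
  -- part 2
  intro k hk hex hmin σ hσ
  have hbp : ∀ i : Fin n, i.val < ℓ ↔ (σ i).val < ℓ :=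
    block_pres hs hlam.1 σ (hint k) hσ.1
  have hbp_symm : ∀ i : Fin n, (σ.symm i).val < ℓ ↔ i.val < ℓ := by
    intro i
    have := hbp (σ.symm i)
    rwa [Equiv.apply_symm_apply] at this
  -- μ is injective within blocks (derived from hσ)
  have hμinj : ∀ a b : Fin n, (a.val < ℓ ↔ b.val < ℓ) →
      (lam - (k : ℂ) • α) a = (lam - (k : ℂ) • α) b → a = b := by
    intro a b hab hv
    have h1 : ((lam - (k : ℂ) • α) ∘ σ) (σ.symm a) = ((lam - (k : ℂ) • α) ∘ σ) (σ.symm b) := by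
      simp [hv]
    have h2 : (σ.symm a).val < ℓ ↔ (σ.symm b).val < ℓ := by
      rw [hbp_symm a, hbp_symm b]; exact hab
    have := inj_block hσ h2 h1
    have := congrArg σ this
    simpa using this
  refine ⟨?_, ?_, ?_⟩
  · -- (ii) uniqueness
    intro σ' hσ'
    have hbp' : ∀ i : Fin n, i.val < ℓ ↔ (σ' i).val < ℓ :=
      block_pres hs hlam.1 σ' (hint k) hσ'.1
    set τ : Equiv.Perm (Fin n) := σ'.trans σ.symm with hτdef
    have hτapp : ∀ i, τ i = σ.symm (σ' i) := fun i => rfl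
    have hτblock : ∀ i : Fin n, i.val < ℓ ↔ (τ i).val < ℓ := by
      intro i
      rw [hτapp, hbp_symm]
      exact hbp' i
    have hcomp : ∀ i, ((lam - (k : ℂ) • α) ∘ σ') i = ((lam - (k : ℂ) • α) ∘ σ) (τ i) := by
      intro i
      simp [hτapp]
    have hsm : StrictMono (τ : Fin n → Fin n) := by
      intro i j hij
      have hij' : i.val < j.val := hij
      rcases lt_trichotomy (τ i).val (τ j).val with h | h | h
      · exact h
      · exact absurd (τ.injective (Fin.ext h)) (Fin.ne_of_val_ne (by omega))
      · exfalso
        by_cases hjb : j.val < ℓ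
        · have hib : i.val < ℓ := by omega
          obtain ⟨m1, hm1, he1⟩ := pos_intdiff hσ' hij' (Or.inl hjb)
          obtain ⟨m2, hm2, he2⟩ := pos_intdiff hσ (i := τ j) (j := τ i) h
            (Or.inl ((hτblock i).mp hib))
          rw [hcomp i, hcomp j] at he1
          have hz : ((m1 + m2 : ℤ) : ℂ) = ((0 : ℤ) : ℂ) := by
            push_cast
            linear_combination -he1 - he2
          have := Int.cast_injective (α := ℂ) hz
          omega
        · by_cases hib : i.val < ℓ
          · -- i < ℓ ≤ j: τ i < ℓ ≤ τ j so τ i < τ j, contradiction with h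
            have h1 := (hτblock i).mp hib
            have h2 : ¬ (τ j).val < ℓ := fun hc => hjb ((hτblock j).mpr hc)
            omega
          · obtain ⟨m1, hm1, he1⟩ := pos_intdiff hσ' hij' (Or.inr (not_lt.mp hib))
            obtain ⟨m2, hm2, he2⟩ := pos_intdiff hσ (i := τ j) (j := τ i) h
              (Or.inr (not_lt.mp (fun hc => hjb ((hτblock j).mpr hc))))
            rw [hcomp i, hcomp j] at he1
            have hz : ((m1 + m2 : ℤ) : ℂ) = ((0 : ℤ) : ℂ) := by
              push_cast
              linear_combination -he1 - he2
            have := Int.cast_injective (α := ℂ) hz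
            omega
    have hid := perm_strictMono_eq_id τ hsm
    funext i
    have h1 : σ.symm (σ' i) = i := (hτapp i) ▸ hid i
    have h2 : σ' i = σ i := by
      have h3 := congrArg σ h1
      simpa using h3
    simp [Function.comp_apply, h2]
  · -- (iii) atypicality
    have hfil : (Finset.univ : Finset (Fin n × Fin n)).filter
        (fun pq => pq.1.val < ℓ ∧ ℓ ≤ pq.2.val ∧
          ((lam - (k : ℂ) • α) ∘ σ) pq.1 + ((lam - (k : ℂ) • α) ∘ σ) pq.2 = 0) =
        {(σ.symm p, σ.symm q)} := by
      ext ⟨i, j⟩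
      simp only [Finset.mem_filter, Finset.mem_univ, true_and, Finset.mem_singleton,
        Prod.mk.injEq, Function.comp_apply]
      constructor
      · rintro ⟨hi, hj, hv⟩
        have hai : (σ i).val < ℓ := (hbp i).mp hi
        have haj : ℓ ≤ (σ j).val := not_lt.mp (fun hc => by
          have := (hbp j).mpr hc; omega)
        -- case analysis on σ i = p, σ j = q
        have hkey : σ i = p ∧ σ j = q := by
          by_cases hip : σ i = p
          · by_cases hjq : σ j = q
            · exact ⟨hip, hjq⟩
            · exfalso
              have hjp : σ j ≠ p := fun h => by rw [h] at haj; omega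
              rw [hip, hmu_p k, hmu_other k (σ j) hjp hjq] at hv
              have : (lam - (k : ℂ) • α) (σ j) = (lam - (k : ℂ) • α) q := by
                rw [hmu_q k, hmu_other k (σ j) hjp hjq]
                linear_combination hv - hpq
              exact hjq (hμinj _ _ (by constructor <;> intro <;> omega) this)
          · by_cases hjq : σ j = q
            · exfalso
              have hiq : σ i ≠ q := fun h => by rw [h] at hai; omega
              rw [hjq, hmu_q k, hmu_other k (σ i) hip hiq] at hv
              have : (lam - (k : ℂ) • α) (σ i) = (lam - (k : ℂ) • α) p := by
                rw [hmu_p k, hmu_other k (σ i) hip hiq]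
                linear_combination hv - hpq
              exact hip (hμinj _ _ (by constructor <;> intro <;> omega) this)
            · exfalso
              have hiq : σ i ≠ q := fun h => by rw [h] at hai; omega
              have hjp : σ j ≠ p := fun h => by rw [h] at haj; omega
              rw [hmu_other k (σ i) hip hiq, hmu_other k (σ j) hjp hjq] at hv
              exact hip (huniq _ _ hai haj hv).1
        constructor
        · rw [← hkey.1]; simp
        · rw [← hkey.2]; simp
      · rintro ⟨rfl, rfl⟩
        refine ⟨(hbp_symm p).mpr hp, ?_, ?_⟩
        · have := (hbp_symm q)
          omega
        · rw [Equiv.apply_symm_apply, Equiv.apply_symm_apply, hmu_p k, hmu_q k]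
          linear_combination hpq
    rw [atyp, hfil]
    exact Finset.card_singleton _
  · -- (iv) approx
    refine ⟨σ, ?_, 1, fun _ => p, fun _ => q, fun _ => (k : ℤ), fun _ => hpqne, ?_, ?_, ?_⟩
    · -- σ ∈ IntegralWeyl
      have hsymm : ∀ {i j : Fin n}, (∃ m : ℤ, lam i - lam j = (m : ℂ)) →
          ∃ m : ℤ, lam j - lam i = (m : ℂ) := by
        intro i j h
        obtain ⟨m, hm⟩ := h
        exact ⟨-m, by push_cast; linear_combination -hm⟩
      have htrans : ∀ {i j t : Fin n}, (∃ m : ℤ, lam i - lam j = (m : ℂ)) →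
          (∃ m : ℤ, lam j - lam t = (m : ℂ)) → ∃ m : ℤ, lam i - lam t = (m : ℂ) := by
        intro i j t h1 h2
        obtain ⟨m1, hm1⟩ := h1
        obtain ⟨m2, hm2⟩ := h2
        exact ⟨m1 + m2, by push_cast; linear_combination hm1 + hm2⟩
      refine perm_mem_closure (fun i j => ∃ m : ℤ, lam i - lam j = (m : ℂ))
        hsymm htrans _ ?_ σ.support.card σ le_rfl ?_
      · intro i j hne hr
        show ∃ a b : Fin n, a ≠ b ∧ (∃ m : ℤ, lam a - lam b = (m : ℂ)) ∧
          Equiv.swap i j = Equiv.swap a b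
        exact ⟨i, j, hne, hr, rfl⟩
      · intro i
        exact intdiff hlam.1 i (σ i) (hbp i)
    · intro t t' h
      exact absurd (Subsingleton.elim t t') h
    · intro t
      simp only [pform, eps, Pi.add_apply]
      rw [Finset.sum_congr rfl (fun i _ => by
        rw [mul_add, mul_ite, mul_one, mul_zero, mul_ite, mul_one, mul_zero])]
      rw [Finset.sum_add_distrib, Finset.sum_ite_eq' Finset.univ p lam,
        Finset.sum_ite_eq' Finset.univ q lam]
      simp [hpq]
    · funext i
      simp only [Function.comp_apply, Fin.sum_univ_one, Pi.sub_apply, Pi.smul_apply]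
      push_cast
      rfl

end
end
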